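/- arXiv:1311.4951 — 14 statements merged into one kernel-verified Lean document; each statement's English description precedes it below -/
import Mathlib

section
/- Let (X, ⪯) be a set with a transitive binary relation, x₀ ∈ X with S(x₀) := {x ∈ X : x ⪯ x₀} nonempty, and η : X → ℝ ∪ {±∞} monotone with respect to ⪯ (i.e., x₁ ⪯ x₂ implies η(x₁) ≤ η(x₂)). Suppose: (A) −∞ < inf{η(x) : x ∈ S(x₀)} < +∞; (B) for any x ∈ S(x₀) with −∞ < η(x) < +∞ and any x′ ∈ S(x) \ {x}, η(x) > η(x′); (C) for any sequence (xₙ) ⊂ S(x₀) with xₙ ∈ S(xₙ₋₁) for all n and η(xₙ) − inf{η(x) : x ∈ S(xₙ₋₁)} → 0, there exists u ∈ X with u ∈ S(xₙ) for all n. Then there exists x̂ ∈ X such that x̂ ∈ S(x₀) and S(x̂) ⊆ {x̂}. -/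
open Filter Topology

/-- **Pre-order principle (Theorem 2.1).** -/
theorem preorder_principle {X : Type*} (r : X → X → Prop)
    (htrans : ∀ {a b c : X}, r a b → r b c → r a c)
    (S : X → Set X) (hS : ∀ x, S x = {x' | r x' x})
    (x₀ : X) (hS0 : (S x₀).Nonempty)
    (η : X → EReal) (hmono : ∀ x₁ x₂, r x₁ x₂ → η x₁ ≤ η x₂)
    (hA : ⊥ < sInf (η '' S x₀) ∧ sInf (η '' S x₀) < ⊤)
    (hB : ∀ x ∈ S x₀, ⊥ < η x → η x < ⊤ →
      ∀ x' ∈ S x, x' ≠ x → η x' < η x)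
    (hC : ∀ xs : ℕ → X, (∀ n, xs n ∈ S x₀) → (∀ n, xs (n + 1) ∈ S (xs n)) →
      Tendsto (fun n => η (xs (n + 1)) - sInf (η '' S (xs n))) atTop (nhds 0) →
      ∃ u : X, ∀ n, u ∈ S (xs n)) :
    ∃ xhat : X, xhat ∈ S x₀ ∧ S xhat ⊆ {xhat} := by
  obtain ⟨hbot, htop⟩ := hA
  -- if some point in S x₀ has empty lower set, we are done
  rcases Classical.em (∃ x ∈ S x₀, ¬(S x).Nonempty) with ⟨x, hx, hne⟩ | hall
  · refine ⟨x, hx, ?_⟩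
    rw [Set.not_nonempty_iff_eq_empty] at hne
    rw [hne]; exact Set.empty_subset _
  push_neg at hall
  -- basic facts
  have hSsub : ∀ x ∈ S x₀, S x ⊆ S x₀ := by
    intro x hx y hy
    simp only [hS, Set.mem_setOf_eq] at *
    exact htrans hy hx
  have hmem_r : ∀ {x y : X}, y ∈ S x → r y x := by
    intro x y hy; rwa [hS, Set.mem_setOf_eq] at hy
  have hInf_bot : ∀ x ∈ S x₀, ⊥ < sInf (η '' S x) := by
    intro x hx
    exact lt_of_lt_of_le hbot (sInf_le_sInf (Set.image_mono (hSsub x hx)))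
  have hInf_top : ∀ x ∈ S x₀, η x < ⊤ → sInf (η '' S x) < ⊤ := by
    intro x hx hxt
    obtain ⟨y, hy⟩ := hall x hx
    calc sInf (η '' S x) ≤ η y := sInf_le (Set.mem_image_of_mem _ hy)
    _ ≤ η x := hmono y x (hmem_r hy)
    _ < ⊤ := hxt
  -- key selection lemma
  have key : ∀ x ∈ S x₀, η x < ⊤ → ∀ ε : ℝ, 0 < ε →
      ∃ y ∈ S x, η y < sInf (η '' S x) + (ε : EReal) := by
    intro x hx hxt ε hε
    have hb := hInf_bot x hx
    have ht := hInf_top x hx hxt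
    have hIlt : sInf (η '' S x) < sInf (η '' S x) + (ε : EReal) := by
      set I := sInf (η '' S x)
      have hI : I = ((I.toReal : ℝ) : EReal) := (EReal.coe_toReal ht.ne hb.ne').symm
      rw [hI, ← EReal.coe_add, EReal.coe_lt_coe_iff]
      linarith
    obtain ⟨a, ha, halt⟩ := sInf_lt_iff.mp hIlt
    obtain ⟨y, hy, rfl⟩ := ha
    exact ⟨y, hy, halt⟩
  -- initial point with finite η
  obtain ⟨a0, ha0, ha0lt⟩ := sInf_lt_iff.mp htop
  obtain ⟨y0, hy0, rfl⟩ := ha0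
  -- the recursive sequence
  have step : ∀ p : {x : X // x ∈ S x₀ ∧ η x < ⊤}, ∀ n : ℕ,
      ∃ q : {x : X // x ∈ S x₀ ∧ η x < ⊤}, q.1 ∈ S p.1 ∧
        η q.1 < sInf (η '' S p.1) + (((1/2 : ℝ)^(n+1) : ℝ) : EReal) := by
    intro p n
    obtain ⟨y, hy, hlt⟩ := key p.1 p.2.1 p.2.2 ((1/2 : ℝ)^(n+1))
      (pow_pos (by norm_num) _)
    exact ⟨⟨y, hSsub _ p.2.1 hy, lt_of_le_of_lt (hmono y p.1 (hmem_r hy)) p.2.2⟩, hy, hlt⟩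
  choose F hF1 hF2 using step
  let xs : ℕ → {x : X // x ∈ S x₀ ∧ η x < ⊤} :=
    fun n => Nat.rec ⟨y0, hy0, ha0lt⟩ (fun n p => F p n) n
  have h1 : ∀ n, (xs n).1 ∈ S x₀ := fun n => (xs n).2.1
  have h2 : ∀ n, (xs (n+1)).1 ∈ S (xs n).1 := fun n => hF1 (xs n) n
  have h3 : ∀ n, η (xs (n+1)).1 < sInf (η '' S (xs n).1) + (((1/2 : ℝ)^(n+1) : ℝ) : EReal) :=
    fun n => hF2 (xs n) n
  -- the tendsto hypothesis
  have hIb : ∀ n, ⊥ < sInf (η '' S (xs n).1) := fun n => hInf_bot _ (h1 n)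
  have hIt : ∀ n, sInf (η '' S (xs n).1) < ⊤ := fun n => hInf_top _ (h1 n) (xs n).2.2
  have hlow : ∀ n, (0 : EReal) ≤ η (xs (n+1)).1 - sInf (η '' S (xs n).1) := by
    intro n
    rw [EReal.le_sub_iff_add_le (Or.inl (hIb n).ne') (Or.inl (hIt n).ne), zero_add]
    exact sInf_le (Set.mem_image_of_mem _ (h2 n))
  have hup : ∀ n, η (xs (n+1)).1 - sInf (η '' S (xs n).1) ≤ (((1/2 : ℝ)^(n+1) : ℝ) : EReal) := by
    intro n
    exact (EReal.sub_lt_of_lt_add ((h3 n).trans_le (add_comm _ _).le)).le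
  have htends : Tendsto (fun n => η ((xs (n+1)).1) - sInf (η '' S ((xs n).1))) atTop (nhds 0) := by
    have h0 : Tendsto (fun n : ℕ => (((1/2 : ℝ)^(n+1) : ℝ) : EReal)) atTop (nhds 0) := by
      have : Tendsto (fun n : ℕ => ((1/2 : ℝ)^(n+1))) atTop (nhds 0) := by
        have := (tendsto_pow_atTop_nhds_zero_of_lt_one (by norm_num : (0:ℝ) ≤ 1/2)
          (by norm_num : (1/2 : ℝ) < 1)).comp (tendsto_add_atTop_nat 1)
        exact this
      have := EReal.tendsto_coe.2 this
      simpa using this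
    exact tendsto_of_tendsto_of_tendsto_of_le_of_le tendsto_const_nhds h0 hlow hup
  obtain ⟨u, hu⟩ := hC (fun n => (xs n).1) h1 h2 htends
  -- u is the desired point
  have hu0 : u ∈ S x₀ := hSsub _ (h1 0) (hu 0)
  have hut : η u < ⊤ := lt_of_le_of_lt (hmono u (xs 0).1 (hmem_r (hu 0))) (xs 0).2.2
  have hub : ⊥ < η u := lt_of_lt_of_le hbot (sInf_le (Set.mem_image_of_mem _ hu0))
  refine ⟨u, hu0, ?_⟩
  intro w hw
  rw [Set.mem_singleton_iff]
  by_contra hne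
  have hwlt : η w < η u := hB u hu0 hub hut w hw hne
  have hwb : ⊥ < η w := lt_of_lt_of_le hbot
    (sInf_le (Set.mem_image_of_mem _ (hSsub u hu0 hw)))
  -- for each n, η u < η w + ε n
  have hkey : ∀ n, η u < η w + (((1/2 : ℝ)^(n+1) : ℝ) : EReal) := by
    intro n
    have hwn : w ∈ S (xs n).1 := by
      simp only [hS, Set.mem_setOf_eq] at *
      exact htrans hw (hu n)
    have h4 : sInf (η '' S (xs n).1) ≤ η w := sInf_le (Set.mem_image_of_mem _ hwn)
    have h5 : η u ≤ η (xs (n+1)).1 := hmono u _ (hmem_r (hu (n+1)))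
    calc η u ≤ η (xs (n+1)).1 := h5
    _ < sInf (η '' S (xs n).1) + (((1/2 : ℝ)^(n+1) : ℝ) : EReal) := h3 n
    _ ≤ η w + (((1/2 : ℝ)^(n+1) : ℝ) : EReal) := add_le_add_left h4 _
  -- lift to reals and derive contradiction
  set a := (η u).toReal with ha
  set b := (η w).toReal with hb
  have hua : η u = (a : EReal) := (EReal.coe_toReal hut.ne hub.ne').symm
  have hwa : η w = (b : EReal) := (EReal.coe_toReal (hwlt.trans hut).ne hwb.ne').symm
  have hba : b < a := by rw [hua, hwa, EReal.coe_lt_coe_iff] at hwlt; exact hwlt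
  obtain ⟨n, hn⟩ := exists_pow_lt_of_lt_one (sub_pos.mpr hba) (by norm_num : (1/2 : ℝ) < 1)
  have := hkey n
  rw [hua, hwa, ← EReal.coe_add, EReal.coe_lt_coe_iff] at this
  have hle : (1/2 : ℝ)^(n+1) ≤ (1/2 : ℝ)^n :=
    pow_le_pow_of_le_one (by norm_num) (by norm_num) (Nat.le_succ n)
  linarith
end

section
/- Let X be a nonempty set, Y a real linear space, D ⊆ Y a convex cone, f : X → nonempty subsets of Y a set-valued map, and F_λ : X × X → nonempty subsets of D (λ ∈ Λ) a family satisfying the triangle inequality property: for all x₁, x₂, x₃ ∈ X and λ ∈ Λ there exist μ, ν ∈ Λ with F_μ(x₁,x₂) + F_ν(x₂,x₃) ⊆ F_λ(x₁,x₃) + D. Define x₂ ⪯ x₁ iff f(x₁) ⊆ f(x₂) + F_λ(x₂,x₁) + D for all λ ∈ Λ. Then ⪯ is transitive. -/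
open Pointwise

/-- **Lemma 3.1.** The relation `x₂ ⪯ x₁ ↔ ∀ λ, f x₁ ⊆ f x₂ + F λ x₂ x₁ + D` is transitive. -/
theorem setvalued_preorder_transitive {X Y Λ : Type*} [Nonempty X]
    [AddCommGroup Y] [Module ℝ Y]
    (D : Set Y) (hDadd : D + D ⊆ D) (hDsmul : ∀ α : ℝ, 0 ≤ α → α • D ⊆ D)
    (f : X → Set Y) (hf : ∀ x, (f x).Nonempty)
    (F : Λ → X → X → Set Y)
    (hFD : ∀ l x x', F l x x' ⊆ D) (hFne : ∀ l x x', (F l x x').Nonempty)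
    (hTI : ∀ x₁ x₂ x₃ : X, ∀ l : Λ, ∃ μ ν : Λ,
      F μ x₁ x₂ + F ν x₂ x₃ ⊆ F l x₁ x₃ + D) :
    Transitive (fun x₂ x₁ => ∀ l : Λ, f x₁ ⊆ f x₂ + F l x₂ x₁ + D) := by
  intro a b c hab hbc l y hy
  obtain ⟨μ, ν, hμν⟩ := hTI a b c l
  obtain ⟨z, ⟨yb, hyb, v, hv, rfl⟩, d1, hd1, rfl⟩ := hbc ν hy
  obtain ⟨z, ⟨ya, hya, u, hu, rfl⟩, d2, hd2, rfl⟩ := hab μ hyb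
  obtain ⟨w, hw, d3, hd3, huv⟩ := hμν (Set.add_mem_add hu hv)
  refine ⟨ya + w, ⟨ya, hya, w, hw, rfl⟩, d3 + (d2 + d1),
    hDadd (Set.add_mem_add hd3 (hDadd (Set.add_mem_add hd2 hd1))), ?_⟩
  have huv' : w + d3 = u + v := huv
  show ya + w + (d3 + (d2 + d1)) = ya + u + d2 + v + d1
  rw [show ya + w + (d3 + (d2 + d1)) = ya + (w + d3) + (d2 + d1) by abel, huv']
  abel
end

section
/- Let X be a nonempty set, Y a real linear space, D ⊆ Y a convex cone, f : X → nonempty subsets of Y, and F_λ : X × X → nonempty subsets of D (λ ∈ Λ) a family satisfying the triangle inequality property. Let x₀ ∈ X with S(x₀) := {x ∈ X : f(x₀) ⊆ f(x) + F_λ(x, x₀) + D for all λ} nonempty. Suppose there exists a D-monotone extended real function ξ : Y → ℝ ∪ {±∞} such that: (D) −∞ < inf ξ(f(S(x₀))) < +∞; (E) for any x ∈ S(x₀) with −∞ < inf ξ(f(x)) < +∞ and any x′ ∈ S(x) \ {x}, inf ξ(f(x)) > inf ξ(f(x′)); (F) for any sequence (xₙ) ⊆ S(x₀) with xₙ ∈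 S(xₙ₋₁) and inf ξ(f(xₙ)) − inf ξ(f(S(xₙ₋₁))) → 0, there exists u ∈ X with u ∈ S(xₙ) for all n. Then there exists x̂ ∈ X such that (a) f(x₀) ⊆ f(x̂) + F_λ(x̂, x₀) + D for all λ, and (b) for every x ≠ x̂ there exists λ with f(x̂) ⊄ f(x) + F_λ(x, x̂) + D. -/
open Pointwise Filter Topology

/-- **Theorem 3.1.** A general set-valued Ekeland variational principle. -/
theorem general_setvalued_EVP {X Y Λ : Type*} [Nonempty X]
    [AddCommGroup Y] [Module ℝ Y]
    (D : Set Y) (hDadd : D + D ⊆ D) (hDsmul : ∀ α : ℝ, 0 ≤ α → α • D ⊆ D)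
    (f : X → Set Y) (hf : ∀ x, (f x).Nonempty)
    (F : Λ → X → X → Set Y)
    (hFD : ∀ l x x', F l x x' ⊆ D) (hFne : ∀ l x x', (F l x x').Nonempty)
    (hTI : ∀ x₁ x₂ x₃ : X, ∀ l : Λ, ∃ μ ν : Λ,
      F μ x₁ x₂ + F ν x₂ x₃ ⊆ F l x₁ x₃ + D)
    (S : X → Set X)
    (hS : ∀ x, S x = {x' | ∀ l : Λ, f x ⊆ f x' + F l x' x + D})
    (x₀ : X) (hS0 : (S x₀).Nonempty)
    (ξ : Y → EReal) (hmono : ∀ y₁ y₂ : Y, y₁ - y₂ ∈ -D → ξ y₁ ≤ ξ y₂)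
    (hD : ⊥ < sInf (ξ '' (⋃ x ∈ S x₀, f x)) ∧ sInf (ξ '' (⋃ x ∈ S x₀, f x)) < ⊤)
    (hE : ∀ x ∈ S x₀, ⊥ < sInf (ξ '' f x) → sInf (ξ '' f x) < ⊤ →
      ∀ x' ∈ S x, x' ≠ x → sInf (ξ '' f x') < sInf (ξ '' f x))
    (hF : ∀ xs : ℕ → X, (∀ n, xs n ∈ S x₀) → (∀ n, xs (n + 1) ∈ S (xs n)) →
      Tendsto (fun n => sInf (ξ '' f (xs (n + 1))) - sInf (ξ '' (⋃ x ∈ S (xs n), f x)))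
        atTop (nhds 0) →
      ∃ u : X, ∀ n, u ∈ S (xs n)) :
    ∃ xhat : X,
      (∀ l : Λ, f x₀ ⊆ f xhat + F l xhat x₀ + D) ∧
      (∀ x : X, x ≠ xhat → ∃ l : Λ, ¬ f xhat ⊆ f x + F l x xhat + D) := by
  classical
  -- abbreviations
  set v : X → EReal := fun x => sInf (ξ '' f x) with hv
  set M : X → EReal := fun x => sInf (ξ '' ⋃ x' ∈ S x, f x') with hMdef
  have hmemS : ∀ {x x' : X}, x' ∈ S x ↔ ∀ l : Λ, f x ⊆ f x' + F l x' x + D := by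
    intro x x'; rw [hS]; exact Iff.rfl
  -- lower bound over S x₀
  have hM0_le : ∀ x ∈ S x₀, M x₀ ≤ v x := by
    intro x hx
    refine sInf_le_sInf (Set.image_mono (f := ξ) ?_)
    exact Set.subset_biUnion_of_mem hx
  by_cases hΛ : Nonempty Λ
  · obtain ⟨l₀⟩ := hΛ
    -- auxiliary decomposition for membership in S
    have hdecomp : ∀ {x x' : X}, x' ∈ S x → ∀ y ∈ f x, ∃ a ∈ f x', ∃ d ∈ D, y = a + d := by
      intro x x' hx' y hy
      have h := (hmemS.1 hx') l₀ hy
      rw [Set.mem_add] at h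
      obtain ⟨u, hu, c, hc, rfl⟩ := h
      rw [Set.mem_add] at hu
      obtain ⟨a, ha, b, hb, rfl⟩ := hu
      exact ⟨a, ha, b + c, hDadd (Set.add_mem_add (hFD _ _ _ hb) hc), by abel⟩
    -- v is monotone along S
    have hvmono : ∀ {x x' : X}, x' ∈ S x → v x' ≤ v x := by
      intro x x' hx'
      refine le_sInf ?_
      rintro b ⟨y, hy, rfl⟩
      obtain ⟨a, ha, d, hd, rfl⟩ := hdecomp hx' y hy
      have : ξ a ≤ ξ (a + d) := by
        apply hmono
        rw [Set.mem_neg]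
        convert hd using 1
        abel
      exact le_trans (sInf_le ⟨a, ha, rfl⟩) this
    -- transitivity
    have htrans : ∀ {x x' : X}, x' ∈ S x → S x' ⊆ S x := by
      intro x x' hx' z hz
      rw [hmemS]
      intro l
      obtain ⟨μ, ν, hμν⟩ := hTI z x' x l
      intro y hy
      have h1 := (hmemS.1 hx') ν hy
      rw [Set.mem_add] at h1
      obtain ⟨u, hu, c, hc, rfl⟩ := h1
      rw [Set.mem_add] at hu
      obtain ⟨a, ha, b, hb, rfl⟩ := hu
      have h2 := (hmemS.1 hz) μ ha
      rw [Set.mem_add] at h2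
      obtain ⟨w, hw, r, hr, rfl⟩ := h2
      rw [Set.mem_add] at hw
      obtain ⟨p, hp, q, hq, rfl⟩ := hw
      have hqb : q + b ∈ F l z x + D := hμν (Set.add_mem_add hq hb)
      rw [Set.mem_add] at hqb
      obtain ⟨t, ht, s, hs, hts⟩ := hqb
      have hsum : p + q + r + b + c = p + (t + s) + (r + c) := by rw [hts]; abel
      rw [hsum]
      have hsum2 : p + (t + s) + (r + c) = p + t + (s + (r + c)) := by abel
      rw [hsum2]
      exact Set.add_mem_add (Set.add_mem_add hp ht)
        (hDadd (Set.add_mem_add hs (hDadd (Set.add_mem_add hr hc))))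
    -- M x ≤ v x' for x' ∈ S x
    have hMle : ∀ {x x' : X}, x' ∈ S x → M x ≤ v x' := by
      intro x x' hx'
      exact sInf_le_sInf (Set.image_mono (f := ξ) (Set.subset_biUnion_of_mem hx'))
    by_cases hA : ∃ x ∈ S x₀, S x = ∅
    · obtain ⟨x, hx, hSx⟩ := hA
      refine ⟨x, hmemS.1 hx, ?_⟩
      intro x' _
      by_contra hcon
      push_neg at hcon
      have : x' ∈ S x := hmemS.2 hcon
      rw [hSx] at this
      exact this
    · push_neg at hA
      have hA' : ∀ x ∈ S x₀, (S x).Nonempty := hA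
      -- pick x₁ with v x₁ < ⊤ in S x₀
      obtain ⟨a0, ha0, hlt0⟩ := sInf_lt_iff.1 hD.2
      obtain ⟨y0, hy0, rfl⟩ := ha0
      rw [Set.mem_iUnion₂] at hy0
      obtain ⟨x₁, hx₁, hy0'⟩ := hy0
      have hvx₁ : v x₁ < ⊤ := lt_of_le_of_lt (sInf_le ⟨y0, hy0', rfl⟩) hlt0
      -- facts about finiteness
      have hvbot : ∀ x ∈ S x₀, ⊥ < v x := fun x hx => lt_of_lt_of_le hD.1 (hM0_le x hx)
      have hMbot : ∀ x ∈ S x₀, ⊥ < M x := by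
        intro x hx
        refine lt_of_lt_of_le hD.1 (sInf_le_sInf (Set.image_mono (f := ξ) ?_))
        exact Set.iUnion₂_subset fun x' hx' => Set.subset_biUnion_of_mem (htrans hx hx')
      -- the step
      have hstep : ∀ (p : {x : X // x ∈ S x₀ ∧ v x < ⊤}) (n : ℕ),
          ∃ q : {x : X // x ∈ S x₀ ∧ v x < ⊤},
            q.1 ∈ S p.1 ∧ v q.1 < M p.1 + (((1/2:ℝ)^n : ℝ) : EReal) := by
        rintro ⟨x, hx, hvx⟩ n
        obtain ⟨x'', hx''⟩ := hA' x hx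
        have hMtop : M x < ⊤ := lt_of_le_of_lt (hMle hx'') (lt_of_le_of_lt (hvmono hx'') hvx)
        have hMbot' : ⊥ < M x := hMbot x hx
        have hMreal : ((M x).toReal : EReal) = M x := EReal.coe_toReal (ne_of_lt hMtop) (ne_of_gt hMbot')
        have hlt : M x < M x + (((1/2:ℝ)^n : ℝ) : EReal) := by
          rw [← hMreal, ← EReal.coe_add, EReal.coe_lt_coe_iff]
          have : (0:ℝ) < (1/2:ℝ)^n := by positivity
          linarith
        obtain ⟨a, ha, halt⟩ := sInf_lt_iff.1 hlt
        obtain ⟨y, hy, rfl⟩ := ha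
        rw [Set.mem_iUnion₂] at hy
        obtain ⟨x', hx', hy'⟩ := hy
        have hvx' : v x' ≤ ξ y := sInf_le ⟨y, hy', rfl⟩
        have h1 : v x' < M x + (((1/2:ℝ)^n : ℝ) : EReal) := lt_of_le_of_lt hvx' halt
        have h2 : v x' < ⊤ := lt_of_lt_of_le h1 (le_trans (le_of_lt (by
          rw [← hMreal, ← EReal.coe_add]; exact EReal.coe_lt_top _)) le_top)
        exact ⟨⟨x', htrans hx hx', h2⟩, hx', h1⟩
      choose nxt hnxt1 hnxt2 using hstep
      set p₁ : {x : X // x ∈ S x₀ ∧ v x < ⊤} := ⟨x₁, hx₁, hvx₁⟩ with hp₁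
      set ps : ℕ → {x : X // x ∈ S x₀ ∧ v x < ⊤} :=
        fun n => Nat.rec p₁ (fun n p => nxt p n) n with hps
      set xs : ℕ → X := fun n => (ps n).1 with hxs
      have hrec : ∀ n, ps (n+1) = nxt (ps n) n := fun n => rfl
      have hchain : ∀ n, xs (n+1) ∈ S (xs n) := fun n => hnxt1 (ps n) n
      have hmem0 : ∀ n, xs n ∈ S x₀ := fun n => (ps n).2.1
      have hvlt : ∀ n, v (xs n) < ⊤ := fun n => (ps n).2.2
      have hbound : ∀ n, v (xs (n+1)) < M (xs n) + (((1/2:ℝ)^n : ℝ) : EReal) :=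
        fun n => hnxt2 (ps n) n
      -- M (xs n) finite
      have hMfin : ∀ n, ⊥ < M (xs n) ∧ M (xs n) < ⊤ := by
        intro n
        refine ⟨hMbot _ (hmem0 n), lt_of_le_of_lt (hMle (hchain n)) (hvlt (n+1))⟩
      have hvfin : ∀ n, ⊥ < v (xs n) ∧ v (xs n) < ⊤ := fun n => ⟨hvbot _ (hmem0 n), hvlt n⟩
      -- the tendsto condition
      have htend : Tendsto (fun n => sInf (ξ '' f (xs (n + 1))) - sInf (ξ '' ⋃ x ∈ S (xs n), f x))
          atTop (nhds 0) := by
        have hrw : ∀ n, sInf (ξ '' f (xs (n + 1))) - sInf (ξ '' ⋃ x ∈ S (xs n), f x)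
            = (((v (xs (n+1))).toReal - (M (xs n)).toReal : ℝ) : EReal) := by
          intro n
          rw [EReal.coe_sub,
            EReal.coe_toReal (ne_of_lt (hvfin (n+1)).2) (ne_of_gt (hvfin (n+1)).1),
            EReal.coe_toReal (ne_of_lt (hMfin n).2) (ne_of_gt (hMfin n).1)]
        simp only [hrw]
        have : Tendsto (fun n => ((v (xs (n+1))).toReal - (M (xs n)).toReal : ℝ)) atTop (nhds 0) := by
          apply squeeze_zero (g := fun n => (1/2:ℝ)^n)
          · intro n
            have h := hMle (hchain n)
            rw [← EReal.coe_toReal (ne_of_lt (hvfin (n+1)).2) (ne_of_gt (hvfin (n+1)).1),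
              ← EReal.coe_toReal (ne_of_lt (hMfin n).2) (ne_of_gt (hMfin n).1),
              EReal.coe_le_coe_iff] at h
            linarith
          · intro n
            have h := hbound n
            rw [← EReal.coe_toReal (ne_of_lt (hvfin (n+1)).2) (ne_of_gt (hvfin (n+1)).1)] at h
            rw [← EReal.coe_toReal (ne_of_lt (hMfin n).2) (ne_of_gt (hMfin n).1),
              ← EReal.coe_add, EReal.coe_lt_coe_iff] at h
            linarith
          · apply tendsto_pow_atTop_nhds_zero_of_lt_one <;> norm_num
        simpa using EReal.tendsto_coe.2 this
      obtain ⟨u, hu⟩ := hF xs hmem0 hchain htend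
      have huS0 : u ∈ S x₀ := htrans (hmem0 0) (hu 0)
      have hvuT : v u < ⊤ := lt_of_le_of_lt (hvmono (hu 0)) (hvlt 0)
      have hvuB : ⊥ < v u := hvbot u huS0
      refine ⟨u, hmemS.1 huS0, ?_⟩
      intro x hxu
      by_contra hcon
      push_neg at hcon
      have hxSu : x ∈ S u := hmemS.2 hcon
      have hlt : v x < v u := hE u huS0 hvuB hvuT x hxSu hxu
      -- but v u ≤ v x from limit argument
      have hxfinT : v x < ⊤ := lt_trans hlt hvuT
      have hxfinB : ⊥ < v x := hvbot x (htrans huS0 hxSu)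
      have hkey : ∀ n : ℕ, (v u).toReal ≤ (v x).toReal + (1/2:ℝ)^n := by
        intro n
        have h1 : M (xs n) ≤ v x := hMle (htrans (hu n) hxSu)
        have h2 : v u ≤ v (xs (n+1)) := hvmono (hu (n+1))
        have h3 : v u < v x + (((1/2:ℝ)^n : ℝ) : EReal) :=
          lt_of_lt_of_le (lt_of_le_of_lt h2 (hbound n))
            (by
              rw [← EReal.coe_toReal (ne_of_lt hxfinT) (ne_of_gt hxfinB)] at h1 ⊢
              rw [← EReal.coe_toReal (ne_of_lt (hMfin n).2) (ne_of_gt (hMfin n).1)] at h1 ⊢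
              rw [EReal.coe_le_coe_iff] at h1
              rw [← EReal.coe_add, ← EReal.coe_add, EReal.coe_le_coe_iff]
              linarith)
        rw [← EReal.coe_toReal (ne_of_lt hvuT) (ne_of_gt hvuB),
          ← EReal.coe_toReal (ne_of_lt hxfinT) (ne_of_gt hxfinB),
          ← EReal.coe_add, EReal.coe_lt_coe_iff] at h3
        linarith
      have hle : (v u).toReal ≤ (v x).toReal := by
        have hlim : Tendsto (fun n : ℕ => (v x).toReal + (1/2:ℝ)^n) atTop (nhds ((v x).toReal)) := by
          have := tendsto_const_nhds (x := (v x).toReal) (f := atTop (α := ℕ))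
          have h2 : Tendsto (fun n : ℕ => (1/2:ℝ)^n) atTop (nhds 0) := by
            apply tendsto_pow_atTop_nhds_zero_of_lt_one <;> norm_num
          simpa using this.add h2
        exact ge_of_tendsto hlim (Filter.Eventually.of_forall hkey)
      have : v u ≤ v x := by
        rw [← EReal.coe_toReal (ne_of_lt hvuT) (ne_of_gt hvuB),
          ← EReal.coe_toReal (ne_of_lt hxfinT) (ne_of_gt hxfinB), EReal.coe_le_coe_iff]
        exact hle
      exact absurd hlt (not_lt.2 this)
  · -- Λ is empty
    have hSuniv : ∀ x : X, S x = Set.univ := by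
      intro x
      rw [hS]
      ext x'
      simp only [Set.mem_setOf_eq, Set.mem_univ, iff_true]
      intro l
      exact absurd ⟨l⟩ hΛ
    by_cases hsub : ∀ a b : X, a = b
    · refine ⟨x₀, fun l => absurd ⟨l⟩ hΛ, fun x hx => absurd (hsub x x₀) hx⟩
    · exfalso
      push_neg at hsub
      obtain ⟨a, b, hab⟩ := hsub
      obtain ⟨a0, ha0, hlt0⟩ := sInf_lt_iff.1 hD.2
      obtain ⟨y0, hy0, rfl⟩ := ha0
      rw [Set.mem_iUnion₂] at hy0
      obtain ⟨x₁, hx₁, hy0'⟩ := hy0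
      have hvx₁T : v x₁ < ⊤ := lt_of_le_of_lt (sInf_le ⟨y0, hy0', rfl⟩) hlt0
      have hvx₁B : ⊥ < v x₁ := lt_of_lt_of_le hD.1 (hM0_le x₁ hx₁)
      set x' : X := if a = x₁ then b else a with hx'
      have hne : x' ≠ x₁ := by
        rw [hx']
        split
        · rename_i h; rw [← h]; exact Ne.symm hab
        · assumption
      have hmem : ∀ z w : X, z ∈ S w := fun z w => by rw [hSuniv]; trivial
      have h1 : v x' < v x₁ := hE x₁ hx₁ hvx₁B hvx₁T x' (hmem x' x₁) hne
      have hvx'B : ⊥ < v x' := lt_of_lt_of_le hD.1 (hM0_le x' (hmem x' x₀))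
      have h2 : v x₁ < v x' := hE x' (hmem x' x₀) hvx'B (lt_trans h1 hvx₁T) x₁ (hmem x₁ x') (Ne.symm hne)
      exact absurd h1 (not_lt.2 (le_of_lt h2))
end

section
/- In the setting of the general set-valued EVP with ξ a nonzero linear functional in the algebraic positive polar cone D^{+#} (so ξ(d) ≥ 0 for all d ∈ D): if ξ is lower bounded on f(S(x₀)) and for any distinct x, x′ ∈ S(x₀) there exists λ₀ ∈ Λ with inf{ξ(q) : q ∈ F_{λ₀}(x′, x)} > 0, then condition (E) holds: for any x ∈ S(x₀) and x′ ∈ S(x) \ {x}, inf ξ(f(x)) > inf ξ(f(x′)). -/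
open Pointwise

/-- **Corollary 3.1** (key implication): assumption (E₁) implies assumption (E). -/
theorem E1_implies_E {X Y Λ : Type*} [Nonempty X]
    [AddCommGroup Y] [Module ℝ Y]
    (D : Set Y) (hDadd : D + D ⊆ D) (hDsmul : ∀ α : ℝ, 0 ≤ α → α • D ⊆ D)
    (f : X → Set Y) (hf : ∀ x, (f x).Nonempty)
    (F : Λ → X → X → Set Y)
    (hFD : ∀ l x x', F l x x' ⊆ D) (hFne : ∀ l x x', (F l x x').Nonempty)
    (hTI : ∀ x₁ x₂ x₃ : X, ∀ l : Λ, ∃ μ ν : Λ,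
      F μ x₁ x₂ + F ν x₂ x₃ ⊆ F l x₁ x₃ + D)
    (S : X → Set X)
    (hS : ∀ x, S x = {x' | ∀ l : Λ, f x ⊆ f x' + F l x' x + D})
    (x₀ : X) (hS0 : (S x₀).Nonempty)
    (ξ : Y →ₗ[ℝ] ℝ) (hξ0 : ξ ≠ 0) (hξD : ∀ d ∈ D, 0 ≤ ξ d)
    (hbd : ∃ c : ℝ, ∀ y ∈ ⋃ x ∈ S x₀, f x, c ≤ ξ y)
    (hE1 : ∀ x ∈ S x₀, ∀ x' ∈ S x₀, x ≠ x' →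
      ∃ l₀ : Λ, 0 < sInf (ξ '' F l₀ x' x)) :
    ∀ x ∈ S x₀, ∀ x' ∈ S x, x' ≠ x → sInf (ξ '' f x') < sInf (ξ '' f x) := by
  intro x hx x' hx' hne
  have hxm := hx
  rw [hS] at hxm
  have hx'm := hx'
  rw [hS] at hx'm
  simp only [Set.mem_setOf_eq] at hxm hx'm
  -- Step 1: x' ∈ S x₀
  have hx'0 : x' ∈ S x₀ := by
    rw [hS]
    simp only [Set.mem_setOf_eq]
    intro l y hy
    obtain ⟨μ, ν, hμν⟩ := hTI x' x x₀ l
    obtain ⟨ab, hab, d, hd, rfl⟩ := hxm ν hy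
    obtain ⟨a, ha, b, hb, rfl⟩ := hab
    obtain ⟨a'p, ha'p, d', hd', rfl⟩ := hx'm μ ha
    obtain ⟨a', ha', p, hp, rfl⟩ := ha'p
    obtain ⟨q, hq, d'', hd'', hqd⟩ := hμν ⟨p, hp, b, hb, rfl⟩
    refine ⟨a' + q, ⟨a', ha', q, hq, rfl⟩, d'' + d' + d,
      hDadd ⟨d'' + d', hDadd ⟨d'', hd'', d', hd', rfl⟩, d, hd, rfl⟩, ?_⟩
    calc a' + q + (d'' + d' + d) = a' + (q + d'') + (d' + d) := by abel
      _ = a' + (p + b) + (d' + d) := by rw [show q + d'' = p + b from hqd]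
      _ = a' + p + d' + b + d := by abel
  obtain ⟨c, hc⟩ := hbd
  obtain ⟨l₀, hl₀⟩ := hE1 x hx x' hx'0 hne.symm
  set A := ξ '' f x' with hA
  set B := ξ '' F l₀ x' x with hB
  have hAne : A.Nonempty := (hf x').image _
  have hAbdd : BddBelow A := by
    refine ⟨c, ?_⟩
    rintro r ⟨y, hy, rfl⟩
    exact hc y (Set.mem_biUnion hx'0 hy)
  have hBbdd : BddBelow B := by
    refine ⟨0, ?_⟩
    rintro r ⟨q, hq, rfl⟩
    exact hξD q (hFD _ _ _ hq)
  have key : ∀ y ∈ f x, sInf A + sInf B ≤ ξ y := by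
    intro y hy
    obtain ⟨ab, hab, d, hd, rfl⟩ := hx'm l₀ hy
    obtain ⟨a, ha, q, hq, rfl⟩ := hab
    have h1 : sInf A ≤ ξ a := csInf_le hAbdd ⟨a, ha, rfl⟩
    have h2 : sInf B ≤ ξ q := csInf_le hBbdd ⟨q, hq, rfl⟩
    have h3 : 0 ≤ ξ d := hξD d hd
    simp only [map_add]
    linarith
  have hmain : sInf A + sInf B ≤ sInf (ξ '' f x) := by
    refine le_csInf ((hf x).image _) ?_
    rintro r ⟨y, hy, rfl⟩
    exact key y hy
  linarith
end

section
/- Let (X,d) be a complete metric space, Y a real linear space, D ⊆ Y a convex cone, f : X → nonempty subsets of Y, and (F_λ)_{λ∈Λ} a family of set-valued maps X × X → nonempty subsets of D satisfying the triangle inequality property. Let x₀ ∈ X with S(x₀) nonempty. Suppose S(x) is dynamically closed for every x ∈ S(x₀), and there exists ξ ∈ D^{+#} \ {0} such that ξ is lower bounded on f(S(x₀)) and there exists λ₀ ∈ Λ such that for every δ > 0, inf{ξ(q) : q ∈ F_{λ₀}(x, x′), d(x,x′) ≥ δ} > 0. Then there exists x̂ ∈ X such that (a) f(x₀) ⊆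 f(x̂) + F_λ(x̂, x₀) + D for all λ, and (b) for every x ≠ x̂ there exists λ with f(x̂) ⊄ f(x) + F_λ(x, x̂) + D. -/
open Pointwise Filter Topology

/-- **Corollary 3.4.** Set-valued EVP on a complete metric space with dynamically
closed sections. -/
theorem setvalued_EVP_dynamically_closed {X Y Λ : Type*} [MetricSpace X] [CompleteSpace X]
    [AddCommGroup Y] [Module ℝ Y]
    (D : Set Y) (hDadd : D + D ⊆ D) (hDsmul : ∀ α : ℝ, 0 ≤ α → α • D ⊆ D)
    (f : X → Set Y) (hf : ∀ x, (f x).Nonempty)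
    (F : Λ → X → X → Set Y)
    (hFD : ∀ l x x', F l x x' ⊆ D) (hFne : ∀ l x x', (F l x x').Nonempty)
    (hTI : ∀ x₁ x₂ x₃ : X, ∀ l : Λ, ∃ μ ν : Λ,
      F μ x₁ x₂ + F ν x₂ x₃ ⊆ F l x₁ x₃ + D)
    (S : X → Set X)
    (hS : ∀ x, S x = {x' | ∀ l : Λ, f x ⊆ f x' + F l x' x + D})
    (x₀ : X) (hS0 : (S x₀).Nonempty)
    (hdyn : ∀ x ∈ S x₀, ∀ xs : ℕ → X, (∀ n, xs n ∈ S x) →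
      (∀ n, S (xs (n + 1)) ⊆ S (xs n)) → (∀ n, S (xs n) ⊆ S x) →
      ∀ xbar : X, Tendsto xs atTop (nhds xbar) → xbar ∈ S x)
    (ξ : Y →ₗ[ℝ] ℝ) (hξ0 : ξ ≠ 0) (hξD : ∀ d ∈ D, 0 ≤ ξ d)
    (hbd : ∃ c : ℝ, ∀ y ∈ ⋃ x ∈ S x₀, f x, c ≤ ξ y)
    (hE3 : ∃ l₀ : Λ, ∀ δ : ℝ, 0 < δ →
      ∃ c : ℝ, 0 < c ∧ ∀ x x' : X, δ ≤ dist x x' → ∀ q ∈ F l₀ x x', c ≤ ξ q) :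
    ∃ xhat : X,
      (∀ l : Λ, f x₀ ⊆ f xhat + F l xhat x₀ + D) ∧
      (∀ x : X, x ≠ xhat → ∃ l : Λ, ¬ f xhat ⊆ f x + F l x xhat + D) := by
  classical
  obtain ⟨l₀, hl₀⟩ := hE3
  obtain ⟨c, hc⟩ := hbd
  have hmemS : ∀ x x' : X, x' ∈ S x ↔ ∀ l, f x ⊆ f x' + F l x' x + D := by
    intro x x'; rw [hS]; exact Iff.rfl
  -- transitivity
  have htrans : ∀ x x' x'' : X, x' ∈ S x → x'' ∈ S x' → x'' ∈ S x := by
    intro x x' x'' h1 h2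
    rw [hmemS] at h1 h2 ⊢
    intro l
    obtain ⟨μ, ν, hμν⟩ := hTI x'' x' x l
    intro y hy
    obtain ⟨w, hw, d, hd, hyd⟩ := h1 ν hy
    obtain ⟨y', hy', q, hq, rfl⟩ := hw
    obtain ⟨w2, hw2, e, he, hye⟩ := h2 μ hy'
    obtain ⟨y'', hy'', p, hp, rfl⟩ := hw2
    have hpq : p + q ∈ F l x'' x + D := hμν ⟨p, hp, q, hq, rfl⟩
    obtain ⟨r, hr, d', hd', hrd⟩ := hpq
    refine ⟨y'' + r, ⟨y'', hy'', r, hr, rfl⟩, d' + (e + d),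
      hDadd ⟨d', hd', e + d, hDadd ⟨e, he, d, hd, rfl⟩, rfl⟩, ?_⟩
    show y'' + r + (d' + (e + d)) = y
    rw [← hyd]
    show y'' + r + (d' + (e + d)) = y' + q + d
    rw [← hye]
    show y'' + r + (d' + (e + d)) = y'' + p + e + q + d
    have hrd' : r + d' = p + q := hrd
    have h2' : y'' + p + e + q + d = y'' + (p + q) + (e + d) := by abel
    rw [h2', ← hrd']
    abel
  set φ : X → ℝ := fun x => sInf (ξ '' f x) with hφdef
  have hcmem : ∀ x ∈ S x₀, ∀ y ∈ f x, c ≤ ξ y := fun x hx y hy =>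
    hc y (Set.mem_biUnion hx hy)
  have hbb : ∀ x ∈ S x₀, BddBelow (ξ '' f x) := fun x hx =>
    ⟨c, by rintro b ⟨y, hy, rfl⟩; exact hcmem x hx y hy⟩
  have hφle : ∀ x ∈ S x₀, ∀ y ∈ f x, φ x ≤ ξ y := fun x hx y hy =>
    csInf_le (hbb x hx) ⟨y, hy, rfl⟩
  have hφc : ∀ x ∈ S x₀, c ≤ φ x := fun x hx =>
    le_csInf ((hf x).image ξ) (by rintro b ⟨y, hy, rfl⟩; exact hcmem x hx y hy)
  have hkey : ∀ x' x : X, x' ∈ S x₀ → x ∈ S x₀ → x ∈ S x' → ∀ r : ℝ,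
      (∀ q ∈ F l₀ x x', r ≤ ξ q) → φ x + r ≤ φ x' := by
    intro x' x hx' hx hxx' r hr
    refine le_csInf ((hf x').image ξ) ?_
    rintro b ⟨y, hy, rfl⟩
    rw [hmemS] at hxx'
    obtain ⟨w, hw, d, hd, hyd⟩ := hxx' l₀ hy
    obtain ⟨y'', hy'', q, hq, rfl⟩ := hw
    have h1 : φ x ≤ ξ y'' := hφle x hx y'' hy''
    have h2 : r ≤ ξ q := hr q hq
    have h3 : 0 ≤ ξ d := hξD d hd
    have h4 : ξ y = ξ y'' + ξ q + ξ d := by rw [← hyd]; simp [map_add]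
    linarith
  have hSmono : ∀ x x' : X, x' ∈ S x → S x' ⊆ S x := fun x x' h z hz => htrans x x' z h hz
  have hq0 : ∀ x x' : X, ∀ q ∈ F l₀ x x', (0:ℝ) ≤ ξ q := fun x x' q hq =>
    hξD q (hFD l₀ x x' hq)
  have hmono : ∀ x' x : X, x' ∈ S x₀ → x ∈ S x₀ → x ∈ S x' → φ x ≤ φ x' := by
    intro x' x h1 h2 h3
    have := hkey x' x h1 h2 h3 0 (fun q hq => hq0 x x' q hq)
    linarith
  by_cases hcase : ∃ x ∈ S x₀, ¬ (S x).Nonempty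
  · obtain ⟨xh, hxh, hempty⟩ := hcase
    refine ⟨xh, (hmemS x₀ xh).mp hxh, ?_⟩
    intro x hx
    by_contra h
    push_neg at h
    exact hempty ⟨x, (hmemS xh x).mpr h⟩
  push_neg at hcase
  obtain ⟨x₁, hx₁⟩ := hS0
  have hbbφ : ∀ x ∈ S x₀, BddBelow (φ '' S x) := fun x hx =>
    ⟨c, by rintro b ⟨z, hz, rfl⟩; exact hφc z (htrans x₀ x z hx hz)⟩
  have hrec : ∀ (n : ℕ) (x : X), ∃ x', x ∈ S x₀ →
      x' ∈ S x ∧ x' ∈ S x₀ ∧ φ x' ≤ sInf (φ '' S x) + (1/2)^n := by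
    intro n x
    by_cases hx : x ∈ S x₀
    · have hne := hcase x hx
      have hpos : (0:ℝ) < (1/2)^n := by positivity
      obtain ⟨a, ⟨z, hz, rfl⟩, ha⟩ := Real.lt_sInf_add_pos (hne.image φ) hpos
      exact ⟨z, fun _ => ⟨hz, htrans x₀ x z hx hz, ha.le⟩⟩
    · exact ⟨x, fun h => absurd h hx⟩
  choose nxt hnxt using hrec
  set xs : ℕ → X := fun n => Nat.rec x₁ (fun k x => nxt k x) n with hxs
  have hS0mem : ∀ n, xs n ∈ S x₀ := by
    intro n; induction n with
    | zero => exact hx₁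
    | succ k ih => exact (hnxt k (xs k) ih).2.1
  have hmem : ∀ n, xs (n+1) ∈ S (xs n) := fun n => (hnxt n (xs n) (hS0mem n)).1
  have hφb : ∀ n, φ (xs (n+1)) ≤ sInf (φ '' S (xs n)) + (1/2)^n :=
    fun n => (hnxt n (xs n) (hS0mem n)).2.2
  have hchain : ∀ n k : ℕ, xs (n + k + 1) ∈ S (xs n) := by
    intro n k; induction k with
    | zero => exact hmem n
    | succ m ih => exact htrans (xs n) (xs (n+m+1)) (xs (n+m+2)) ih (hmem (n+m+1))
  have hlt : ∀ n m : ℕ, n < m → xs m ∈ S (xs n) := by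
    intro n m h
    obtain ⟨k, rfl⟩ : ∃ k, m = n + k + 1 := ⟨m - n - 1, by omega⟩
    exact hchain n k
  have hanti : ∀ n, φ (xs (n+1)) ≤ φ (xs n) :=
    fun n => hmono (xs n) (xs (n+1)) (hS0mem n) (hS0mem (n+1)) (hmem n)
  have hbdr : BddBelow (Set.range fun n => φ (xs n)) :=
    ⟨c, by rintro b ⟨n, rfl⟩; exact hφc (xs n) (hS0mem n)⟩
  have hφconv : CauchySeq (fun n => φ (xs n)) :=
    (tendsto_atTop_ciInf (antitone_nat_of_succ_le hanti) hbdr).cauchySeq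
  have hcauchy : CauchySeq xs := by
    rw [Metric.cauchySeq_iff']
    intro ε hε
    obtain ⟨cε, hcε, hqε⟩ := hl₀ ε hε
    obtain ⟨N, hN⟩ := Metric.cauchySeq_iff.mp hφconv cε hcε
    refine ⟨N, fun n hn => ?_⟩
    rcases eq_or_lt_of_le hn with h | h
    · rw [← h, dist_self]; exact hε
    · by_contra hd
      push_neg at hd
      have hmemn : xs n ∈ S (xs N) := hlt N n h
      have hqb : ∀ q ∈ F l₀ (xs n) (xs N), cε ≤ ξ q := fun q hq =>
        hqε (xs n) (xs N) hd q hq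
      have hk := hkey (xs N) (xs n) (hS0mem N) (hS0mem n) hmemn cε hqb
      have habs := hN n hn N le_rfl
      rw [Real.dist_eq] at habs
      have h5 := abs_lt.mp habs
      linarith [h5.1, h5.2]
  obtain ⟨xhat, hxhat⟩ := cauchySeq_tendsto_of_complete hcauchy
  have hhat : ∀ n, xhat ∈ S (xs n) := by
    intro n
    have hseq : Tendsto (fun k => xs (n + k + 1)) atTop (nhds xhat) := by
      have heq : (fun k => xs (n + k + 1)) = (fun k => xs (k + (n + 1))) := by
        funext k; exact congrArg xs (show n + k + 1 = k + (n + 1) by omega)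
      rw [heq]
      exact hxhat.comp (tendsto_add_atTop_nat (n+1))
    exact hdyn (xs n) (hS0mem n) (fun k => xs (n + k + 1))
      (fun k => hchain n k)
      (fun k => hSmono (xs (n+k+1)) (xs (n+k+2)) (hmem (n+k+1)))
      (fun k => hSmono (xs n) (xs (n+k+1)) (hchain n k))
      xhat hseq
  have hhat0 : xhat ∈ S x₀ := htrans x₀ (xs 0) xhat (hS0mem 0) (hhat 0)
  refine ⟨xhat, (hmemS x₀ xhat).mp hhat0, ?_⟩
  intro x hx
  by_contra h
  push_neg at h
  have hxhatmem : x ∈ S xhat := (hmemS xhat x).mpr h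
  have hδ : 0 < dist x xhat := dist_pos.mpr hx
  obtain ⟨cδ, hcδ, hqδ⟩ := hl₀ (dist x xhat) hδ
  have hxS0 : x ∈ S x₀ := htrans x₀ xhat x hhat0 hxhatmem
  have h1 : φ x + cδ ≤ φ xhat :=
    hkey xhat x hhat0 hxS0 hxhatmem cδ (fun q hq => hqδ x xhat le_rfl q hq)
  have h2 : ∀ n : ℕ, φ xhat ≤ φ x + (1/2)^n := by
    intro n
    have hxSn : x ∈ S (xs n) := htrans (xs n) xhat x (hhat n) hxhatmem
    have ha : φ xhat ≤ φ (xs (n+1)) :=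
      hmono (xs (n+1)) xhat (hS0mem (n+1)) hhat0 (hhat (n+1))
    have hb : sInf (φ '' S (xs n)) ≤ φ x :=
      csInf_le (hbbφ (xs n) (hS0mem n)) ⟨x, hxSn, rfl⟩
    linarith [hφb n]
  have h3 : φ xhat ≤ φ x := by
    by_contra h3
    push_neg at h3
    obtain ⟨n, hn⟩ := exists_pow_lt_of_lt_one (sub_pos.mpr h3) (by norm_num : (1:ℝ)/2 < 1)
    linarith [h2 n]
  linarith
end

section
/- Let (X,d) be a complete metric space, Y a locally convex space, D ⊆ Y a closed convex cone, and k₀ ∈ D \ (−D). Let f : X → nonempty subsets of Y be D-sequentially lower monotone with D-closed values, and suppose f(X) is D-bounded. Suppose x₀ ∈ X and ε > 0 satisfy f(x₀) ⊄ f(x) + εk₀ + D for all x ∈ X. Then for any λ > 0 there exists x̂ ∈ X such that: (a) f(x₀) ⊆ f(x̂) + (ε/λ)d(x̂,x₀)k₀ + D; (b) for every x ≠ x̂, f(x̂) ⊄ f(x) + (ε/λ)d(x,x̂)k₀ + D; (c) d(x₀, x̂) ≤ λ. -/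
open Pointwise Filter Topology

section
variable {X Y : Type*} [MetricSpace X] [AddCommGroup Y] [Module ℝ Y]

/-- Auxiliary relation for the set-valued EVP proof. -/
def EVPrel (D : Set Y) (k₀ : Y) (f : X → Set Y) (c : ℝ) (x' x : X) : Prop :=
  f x ⊆ f x' + {(c * dist x' x) • k₀} + D

end

lemma EVP_mem_avd {Y : Type*} [AddCommGroup Y] (A D : Set Y) (v y : Y) :
    y ∈ A + {v} + D ↔ ∃ a ∈ A, ∃ d ∈ D, y = a + v + d := by
  simp only [Set.mem_add, Set.mem_singleton_iff]
  constructor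
  · rintro ⟨p, ⟨a, ha, w, rfl, rfl⟩, d, hd, rfl⟩
    exact ⟨a, ha, d, hd, rfl⟩
  · rintro ⟨a, ha, d, hd, rfl⟩
    exact ⟨a + v, ⟨a, ha, v, rfl, rfl⟩, d, hd, rfl⟩

/-- **Corollary 3.5.** An improvement of Ha's set-valued Ekeland variational principle. -/
theorem Ha_setvalued_EVP {X Y : Type*} [MetricSpace X] [CompleteSpace X]
    [AddCommGroup Y] [Module ℝ Y] [TopologicalSpace Y] [IsTopologicalAddGroup Y]
    [ContinuousSMul ℝ Y] [LocallyConvexSpace ℝ Y]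
    (D : Set Y) (hDcl : IsClosed D) (hDadd : D + D ⊆ D)
    (hDsmul : ∀ α : ℝ, 0 ≤ α → α • D ⊆ D)
    (k₀ : Y) (hk₀ : k₀ ∈ D) (hk₀' : k₀ ∉ -D)
    (f : X → Set Y) (hf : ∀ x, (f x).Nonempty)
    (hslm : ∀ (xs : ℕ → X) (xbar : X), (∀ n, f (xs n) ⊆ f (xs (n + 1)) + D) →
      Tendsto xs atTop (nhds xbar) → ∀ n, f (xs n) ⊆ f xbar + D)
    (hclv : ∀ x : X, IsClosed (f x + D))
    (hbd : ∃ M : Set Y, Bornology.IsVonNBounded ℝ M ∧ (⋃ x : X, f x) ⊆ M + D)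
    (x₀ : X) (ε : ℝ) (hε : 0 < ε)
    (hx₀ : ∀ x : X, ¬ f x₀ ⊆ f x + {ε • k₀} + D) :
    ∀ lam : ℝ, 0 < lam → ∃ xhat : X,
      (f x₀ ⊆ f xhat + {((ε / lam) * dist xhat x₀) • k₀} + D) ∧
      (∀ x : X, x ≠ xhat → ¬ f xhat ⊆ f x + {((ε / lam) * dist x xhat) • k₀} + D) ∧
      dist x₀ xhat ≤ lam := by
  intro lam hlam
  set c : ℝ := ε / lam with hcdef
  have hc : 0 < c := div_pos hε hlam
  -- basic cone facts
  have hD0 : (0 : Y) ∈ D := by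
    have := hDsmul 0 le_rfl (Set.smul_mem_smul_set (a := (0:ℝ)) hk₀)
    simpa using this
  have hkD : ∀ t : ℝ, 0 ≤ t → t • k₀ ∈ D := fun t ht =>
    hDsmul t ht (Set.smul_mem_smul_set hk₀)
  have hDconv : Convex ℝ D := by
    intro a ha b hb s t hs ht _
    exact hDadd (Set.add_mem_add (hDsmul s hs (Set.smul_mem_smul_set ha))
      (hDsmul t ht (Set.smul_mem_smul_set hb)))
  -- separation
  have hnk : -k₀ ∉ D := fun h => hk₀' (Set.mem_neg.mpr h)
  obtain ⟨ξ, u, hu1, hu2⟩ := geometric_hahn_banach_closed_point hDconv hDcl hnk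
  have hu0 : 0 < u := by have := hu1 0 hD0; simpa using this
  have hξD : ∀ d ∈ D, ξ d ≤ 0 := by
    intro d hd
    by_contra h
    push_neg at h
    have ht : (0:ℝ) ≤ (u + 1) / ξ d := by positivity
    have hmem : ((u + 1) / ξ d) • d ∈ D := hDsmul _ ht (Set.smul_mem_smul_set hd)
    have := hu1 _ hmem
    rw [map_smul] at this
    have : ((u + 1) / ξ d) * ξ d < u := this
    rw [div_mul_cancel₀ _ (ne_of_gt h)] at this
    linarith
  set η : Y →L[ℝ] ℝ := -ξ with hηdef
  have hηD : ∀ d ∈ D, 0 ≤ η d := by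
    intro d hd
    simp only [hηdef, ContinuousLinearMap.neg_apply]
    linarith [hξD d hd]
  set α : ℝ := η k₀ with hαdef
  have hα : 0 < α := by
    have h1 : u < ξ (-k₀) := hu2
    rw [map_neg] at h1
    simp only [hαdef, hηdef, ContinuousLinearMap.neg_apply]
    linarith
  -- lower bound for η on f(X)
  obtain ⟨M, hMb, hMD⟩ := hbd
  have hηM : Bornology.IsBounded (η '' M) := by
    have := hMb.image η
    rwa [NormedSpace.isVonNBounded_iff] at this
  obtain ⟨m, hm⟩ := hηM.bddBelow
  have hmf : ∀ x : X, ∀ y ∈ f x, m ≤ η y := by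
    intro x y hy
    have hyM : y ∈ M + D := hMD (Set.mem_iUnion.mpr ⟨x, hy⟩)
    rw [Set.mem_add] at hyM
    obtain ⟨a, ha, d, hd, rfl⟩ := hyM
    have h1 : m ≤ η a := hm ⟨a, ha, rfl⟩
    have h2 : 0 ≤ η d := hηD d hd
    rw [map_add]
    linarith
  -- relation R
  set R : X → X → Prop := EVPrel D k₀ f c with hRdef
  have hmono : ∀ (A : Set Y) (s t : ℝ), s ≤ t → A + {t • k₀} + D ⊆ A + {s • k₀} + D := by
    intro A s t hst y hy
    rw [EVP_mem_avd] at hy ⊢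
    obtain ⟨a, ha, d, hd, rfl⟩ := hy
    refine ⟨a, ha, (t - s) • k₀ + d, hDadd (Set.add_mem_add (hkD _ (by linarith)) hd), ?_⟩
    module
  have hdropD : ∀ (A : Set Y) (t : ℝ), 0 ≤ t → A + {t • k₀} + D ⊆ A + D := by
    intro A t ht y hy
    rw [EVP_mem_avd] at hy
    obtain ⟨a, ha, d, hd, rfl⟩ := hy
    rw [add_assoc]
    exact Set.add_mem_add ha (hDadd (Set.add_mem_add (hkD t ht) hd))
  have hrefl : ∀ x, R x x := by
    intro x y hy
    rw [EVP_mem_avd]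
    exact ⟨y, hy, 0, hD0, by simp⟩
  have htrans : ∀ x'' x' x, R x'' x' → R x' x → R x'' x := by
    intro x'' x' x h1 h2 y hy
    have hy' := h2 hy
    rw [EVP_mem_avd] at hy'
    obtain ⟨a, ha, d, hd, rfl⟩ := hy'
    have ha' := h1 ha
    rw [EVP_mem_avd] at ha'
    obtain ⟨b, hb, e, he, rfl⟩ := ha'
    apply hmono _ _ (c * (dist x'' x' + dist x' x))
      (mul_le_mul_of_nonneg_left (dist_triangle _ _ _) hc.le)
    rw [EVP_mem_avd]
    refine ⟨b, hb, e + d, hDadd (Set.add_mem_add he hd), ?_⟩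
    rw [mul_add, add_smul]
    module
  -- scalarization
  set φ : X → ℝ := fun x => sInf (η '' f x) with hφdef
  have hφbdd : ∀ x, BddBelow (η '' f x) := by
    rintro x
    exact ⟨m, by rintro _ ⟨y, hy, rfl⟩; exact hmf x y hy⟩
  have hφm : ∀ x, m ≤ φ x := fun x =>
    le_csInf ((hf x).image η) (by rintro _ ⟨y, hy, rfl⟩; exact hmf x y hy)
  have hA : ∀ x' x, R x' x → φ x' + (c * dist x' x) * α ≤ φ x := by
    intro x' x h
    apply le_csInf ((hf x).image η)
    rintro _ ⟨y, hy, rfl⟩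
    have hy' := h hy
    rw [EVP_mem_avd] at hy'
    obtain ⟨a, ha, d, hd, rfl⟩ := hy'
    have h1 : φ x' ≤ η a := csInf_le (hφbdd x') ⟨a, ha, rfl⟩
    have h2 : 0 ≤ η d := hηD d hd
    have h3 : η (a + (c * dist x' x) • k₀ + d) = η a + (c * dist x' x) * α + η d := by
      rw [map_add, map_add, map_smul]; simp [hαdef, smul_eq_mul]
    rw [h3]
    linarith
  -- construction of the sequence
  have hex : ∀ (x : X) (n : ℕ), ∃ x', R x' x ∧
      φ x' < sInf (φ '' {z | R z x}) + (1/2 : ℝ) ^ n := by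
    intro x n
    have hne : (φ '' {z | R z x}).Nonempty := ⟨φ x, x, hrefl x, rfl⟩
    obtain ⟨_, ⟨z, hz, rfl⟩, hlt⟩ :=
      Real.lt_sInf_add_pos hne (by positivity : (0:ℝ) < (1/2 : ℝ) ^ n)
    exact ⟨z, hz, hlt⟩
  choose g hg1 hg2 using hex
  set seq : ℕ → X := fun n => Nat.rec x₀ (fun k xk => g xk k) n with hseqdef
  have hseq0 : seq 0 = x₀ := rfl
  have hseqS : ∀ n, seq (n + 1) = g (seq n) n := fun n => rfl
  have hchain1 : ∀ n, R (seq (n + 1)) (seq n) := fun n => hg1 (seq n) n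
  have hchainR : ∀ m n, n ≤ m → R (seq m) (seq n) := by
    intro m n h
    induction m, h using Nat.le_induction with
    | base => exact hrefl _
    | succ p hp ih => exact htrans _ _ _ (hchain1 p) ih
  have hdistφ : ∀ n m, n ≤ m → φ (seq m) + (c * dist (seq m) (seq n)) * α ≤ φ (seq n) :=
    fun n m h => hA _ _ (hchainR m n h)
  -- Cauchy
  have hanti : Antitone fun n => φ (seq n) := by
    apply antitone_nat_of_succ_le
    intro n
    have h1 := hdistφ n (n + 1) (Nat.le_succ n)
    have h2 : 0 ≤ (c * dist (seq (n+1)) (seq n)) * α := by positivity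
    linarith
  have hbd2 : BddBelow (Set.range fun n => φ (seq n)) :=
    ⟨m, by rintro _ ⟨n, rfl⟩; exact hφm _⟩
  have hcs : CauchySeq fun n => φ (seq n) := (tendsto_atTop_ciInf hanti hbd2).cauchySeq
  have hcsX : CauchySeq seq := by
    rw [Metric.cauchySeq_iff] at hcs ⊢
    intro δ hδ
    obtain ⟨N, hN⟩ := hcs (c * α * δ) (by positivity)
    have key : ∀ p q, N ≤ p → N ≤ q → q ≤ p → dist (seq p) (seq q) < δ := by
      intro p q hp hq hqp
      have h1 := hdistφ q p hqp
      have h2 := hN p hp q hq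
      rw [Real.dist_eq] at h2
      have h3 : φ (seq q) - φ (seq p) < c * α * δ := by
        calc φ (seq q) - φ (seq p) ≤ |φ (seq q) - φ (seq p)| := le_abs_self _
        _ = |φ (seq p) - φ (seq q)| := abs_sub_comm _ _
        _ < c * α * δ := h2
      have hre : (c * dist (seq p) (seq q)) * α = (c * α) * dist (seq p) (seq q) := by ring
      have h5 : (c * α) * dist (seq p) (seq q) < (c * α) * δ := by linarith
      exact lt_of_mul_lt_mul_left h5 (by positivity)
    refine ⟨N, fun p hp q hq => ?_⟩
    rcases le_total q p with h | h
    · exact key p q hp hq h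
    · rw [dist_comm]; exact key q p hq hp h
  obtain ⟨xhat, hlim⟩ := cauchySeq_tendsto_of_complete hcsX
  -- pass to the limit
  have hsub1 : ∀ n, f (seq n) ⊆ f (seq (n + 1)) + D := fun n hy =>
    fun hy' => hdropD _ _ (by positivity) ((hchain1 n) hy')
  have hsubhat : ∀ n, f (seq n) ⊆ f xhat + D := hslm seq xhat hsub1 hlim
  have hRhat : ∀ n, R xhat (seq n) := by
    intro n y hy
    have hz : ∀ m, n ≤ m → y - (c * dist (seq m) (seq n)) • k₀ ∈ f xhat + D := by
      intro m hmn
      have h1 := (hchainR m n hmn) hy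
      rw [EVP_mem_avd] at h1
      obtain ⟨a, ha, d, hd, heq⟩ := h1
      have h2 : a ∈ f xhat + D := hsubhat m ha
      rw [Set.mem_add] at h2
      obtain ⟨b, hb, e, he, heq2⟩ := h2
      rw [Set.mem_add]
      refine ⟨b, hb, e + d, hDadd (Set.add_mem_add he hd), ?_⟩
      rw [heq, ← heq2]
      abel
    have hten : Tendsto (fun mm => y - (c * dist (seq mm) (seq n)) • k₀) atTop
        (nhds (y - (c * dist xhat (seq n)) • k₀)) := by
      refine Tendsto.sub tendsto_const_nhds (Tendsto.smul ?_ tendsto_const_nhds)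
      exact (hlim.dist tendsto_const_nhds).const_mul c
    have hmem := (hclv xhat).mem_of_tendsto hten (eventually_atTop.mpr ⟨n, hz⟩)
    rw [Set.mem_add] at hmem
    obtain ⟨b, hb, e, he, heq⟩ := hmem
    rw [EVP_mem_avd]
    refine ⟨b, hb, e, he, ?_⟩
    have : y = b + e + (c * dist xhat (seq n)) • k₀ := by
      rw [heq]; abel
    rw [this]; abel
  refine ⟨xhat, ?_, ?_, ?_⟩
  · exact hRhat 0
  · -- (b) minimality
    intro x hx hcon
    have hconR : R x xhat := hcon
    have hRxn : ∀ n, R x (seq n) := fun n => htrans x xhat (seq n) hconR (hRhat n)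
    have h1 : φ x + (c * dist x xhat) * α ≤ φ xhat := hA x xhat hconR
    have h2 : ∀ n, φ xhat ≤ φ (seq (n + 1)) := by
      intro n
      have := hA xhat (seq (n + 1)) (hRhat (n + 1))
      have hnn : 0 ≤ (c * dist xhat (seq (n + 1))) * α := by positivity
      linarith
    have h3 : ∀ n, φ (seq (n + 1)) < φ x + (1/2 : ℝ) ^ n := by
      intro n
      have hle : sInf (φ '' {z | R z (seq n)}) ≤ φ x :=
        csInf_le ⟨m, by rintro _ ⟨z, _, rfl⟩; exact hφm _⟩ ⟨x, hRxn n, rfl⟩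
      have := hg2 (seq n) n
      calc φ (seq (n + 1)) < sInf (φ '' {z | R z (seq n)}) + (1/2 : ℝ) ^ n := this
      _ ≤ φ x + (1/2 : ℝ) ^ n := by linarith
    have hd0 : 0 < dist x xhat := dist_pos.mpr hx
    obtain ⟨n, hn⟩ := exists_pow_lt_of_lt_one
      (show (0:ℝ) < (c * dist x xhat) * α by positivity) (by norm_num : (1/2 : ℝ) < 1)
    linarith [h2 n, h3 n]
  · -- (c) distance bound
    by_contra h
    push_neg at h
    apply hx₀ xhat
    have h1 : ε ≤ c * dist xhat x₀ := by
      rw [hcdef, div_mul_eq_mul_div, le_div_iff₀ hlam, dist_comm]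
      nlinarith
    exact fun y hy => hmono (f xhat) ε (c * dist xhat x₀) h1 ((hRhat 0) hy)
end

section
/- Let Y be a real linear space, D ⊆ Y a convex cone, and k₀ ∈ D \ (−vcl(D)). Define the Gerstewitz function ξ_{k₀}(y) = inf{t ∈ ℝ : y ∈ tk₀ − D} (with inf ∅ = +∞). Then ξ_{k₀} is subadditive: ξ_{k₀}(y₁ + y₂) ≤ ξ_{k₀}(y₁) + ξ_{k₀}(y₂) for all y₁, y₂ ∈ Y. -/
open Pointwise Filter Topology

/-- The vector closure of a set `A` in a real linear space. -/
def vcl {Y : Type*} [AddCommGroup Y] [Module ℝ Y] (A : Set Y) : Set Y :=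
  {y | ∃ v : Y, ∃ lam : ℕ → ℝ, (∀ n, 0 ≤ lam n) ∧
    Tendsto lam atTop (nhds 0) ∧ ∀ n, y + lam n • v ∈ A}

/-- The Gerstewitz scalarization function `ξ_{k₀}(y) = inf {t : y ∈ t k₀ - D}`,
with values in `ℝ ∪ {±∞}` (here `sInf ∅ = +∞` in `EReal`). -/
noncomputable def gerstewitz {Y : Type*} [AddCommGroup Y] [Module ℝ Y]
    (D : Set Y) (k₀ : Y) (y : Y) : EReal :=
  sInf {t : EReal | ∃ r : ℝ, t = (r : EReal) ∧ r • k₀ - y ∈ D}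

lemma gerstewitz_ne_bot {Y : Type*} [AddCommGroup Y] [Module ℝ Y]
    (D : Set Y) (hDsmul : ∀ α : ℝ, 0 ≤ α → α • D ⊆ D)
    (k₀ : Y) (hk₀' : k₀ ∉ -vcl D) (y : Y) : gerstewitz D k₀ y ≠ ⊥ := by
  intro h
  apply hk₀'
  rw [Set.mem_neg]
  have H : ∀ n : ℕ, ∃ r : ℝ, r < -(n + 1) ∧ r • k₀ - y ∈ D := by
    intro n
    have hlt : sInf {t : EReal | ∃ r : ℝ, t = (r : EReal) ∧ r • k₀ - y ∈ D}
        < ((-(n + 1 : ℝ)) : EReal) := by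
      rw [show sInf {t : EReal | ∃ r : ℝ, t = (r : EReal) ∧ r • k₀ - y ∈ D} = ⊥ from h]
      exact EReal.bot_lt_coe _
    obtain ⟨t, ⟨r, rfl, hr⟩, hlt'⟩ := sInf_lt_iff.mp hlt
    exact ⟨r, by exact_mod_cast hlt', hr⟩
  choose r hrlt hrD using H
  have hrneg : ∀ n, r n < 0 := fun n => lt_trans (hrlt n) (by have : (0:ℝ) ≤ n := Nat.cast_nonneg n; linarith)
  refine ⟨-y, fun n => 1 / (-(r n)), fun n => le_of_lt (one_div_pos.mpr (by linarith [hrneg n])), ?_, ?_⟩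
  · apply squeeze_zero (fun n => le_of_lt (one_div_pos.mpr (by linarith [hrneg n]))) (g := fun n : ℕ => 1 / (n + 1 : ℝ))
    · intro n
      apply one_div_le_one_div_of_le (by positivity)
      linarith [hrlt n]
    · exact tendsto_one_div_add_atTop_nhds_zero_nat
  · intro n
    have key : (1 / (-(r n))) • (r n • k₀ - y) ∈ D :=
      hDsmul _ (le_of_lt (one_div_pos.mpr (by linarith [hrneg n]))) ⟨_, hrD n, rfl⟩
    have : (1 / (-(r n))) • (r n • k₀ - y) = -k₀ + (1 / (-(r n))) • (-y) := by
      rw [smul_sub, smul_smul]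
      have hne : r n ≠ 0 := ne_of_lt (hrneg n)
      rw [show (1 / (-(r n))) * r n = -1 by field_simp]
      rw [smul_neg]
      module
    rwa [this] at key

/-- **Lemma 3.2 (vi).** The Gerstewitz function is subadditive. -/
theorem gerstewitz_subadditive {Y : Type*} [AddCommGroup Y] [Module ℝ Y]
    (D : Set Y) (hDadd : D + D ⊆ D) (hDsmul : ∀ α : ℝ, 0 ≤ α → α • D ⊆ D)
    (k₀ : Y) (hk₀ : k₀ ∈ D) (hk₀' : k₀ ∉ -vcl D) :
    ∀ y₁ y₂ : Y, gerstewitz D k₀ (y₁ + y₂) ≤ gerstewitz D k₀ y₁ + gerstewitz D k₀ y₂ := by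
  intro y₁ y₂
  have hb1 := gerstewitz_ne_bot D hDsmul k₀ hk₀' y₁
  have hb2 := gerstewitz_ne_bot D hDsmul k₀ hk₀' y₂
  by_cases ht1 : gerstewitz D k₀ y₁ = ⊤
  · rw [ht1, EReal.top_add_of_ne_bot hb2]; exact le_top
  by_cases ht2 : gerstewitz D k₀ y₂ = ⊤
  · rw [ht2, EReal.add_top_of_ne_bot hb1]; exact le_top
  -- both finite
  obtain ⟨a, ha⟩ : ∃ a : ℝ, gerstewitz D k₀ y₁ = (a : EReal) :=
    ⟨_, (EReal.coe_toReal ht1 hb1).symm⟩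
  obtain ⟨b, hb⟩ : ∃ b : ℝ, gerstewitz D k₀ y₂ = (b : EReal) :=
    ⟨_, (EReal.coe_toReal ht2 hb2).symm⟩
  rw [ha, hb, ← EReal.coe_add]
  apply le_of_forall_gt_imp_ge_of_dense
  intro c hc
  induction c using EReal.rec with
  | bot => exact absurd hc (not_lt_bot)
  | top => exact le_top
  | coe z =>
    have hz : a + b < z := by exact_mod_cast hc
    set ε : ℝ := (z - (a + b)) / 2 with hε
    have hεpos : 0 < ε := by simp [hε]; linarith
    have h1 : ∃ r₁ : ℝ, r₁ < a + ε ∧ r₁ • k₀ - y₁ ∈ D := by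
      have : gerstewitz D k₀ y₁ < ((a + ε : ℝ) : EReal) := by
        rw [ha]; exact_mod_cast (by linarith : a < a + ε)
      obtain ⟨t, ⟨r, rfl, hr⟩, hlt'⟩ := sInf_lt_iff.mp this
      exact ⟨r, by exact_mod_cast hlt', hr⟩
    have h2 : ∃ r₂ : ℝ, r₂ < b + ε ∧ r₂ • k₀ - y₂ ∈ D := by
      have : gerstewitz D k₀ y₂ < ((b + ε : ℝ) : EReal) := by
        rw [hb]; exact_mod_cast (by linarith : b < b + ε)
      obtain ⟨t, ⟨r, rfl, hr⟩, hlt'⟩ := sInf_lt_iff.mp this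
      exact ⟨r, by exact_mod_cast hlt', hr⟩
    obtain ⟨r₁, hr₁, hD₁⟩ := h1
    obtain ⟨r₂, hr₂, hD₂⟩ := h2
    have hmem : (r₁ + r₂) • k₀ - (y₁ + y₂) ∈ D := by
      have := hDadd (Set.add_mem_add hD₁ hD₂)
      rwa [show (r₁ • k₀ - y₁) + (r₂ • k₀ - y₂) = (r₁ + r₂) • k₀ - (y₁ + y₂) by module] at this
    calc gerstewitz D k₀ (y₁ + y₂) ≤ ((r₁ + r₂ : ℝ) : EReal) :=
          sInf_le ⟨r₁ + r₂, rfl, hmem⟩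
      _ ≤ ((z : ℝ) : EReal) := by exact_mod_cast (by simp [hε] at *; linarith : r₁ + r₂ ≤ z)
end

section
/- Let Y be a real linear space, D a convex cone, k₀ ∈ D \ (−vcl(D)), and ξ_{k₀}(y) = inf{t : y ∈ tk₀ − D}. Then for y ∈ Y and r ∈ ℝ: ξ_{k₀}(y) < r iff y ∈ rk₀ − (D + (0,∞)k₀), and ξ_{k₀}(y) ≤ r iff y ∈ rk₀ − vcl_{k₀}(D). -/
open Pointwise Filter Topology

/-- The `k₀`-directional vector closure of a set `A`. -/
def vclDir {Y : Type*} [AddCommGroup Y] [Module ℝ Y] (k₀ : Y) (A : Set Y) : Set Y :=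
  {y | ∃ lam : ℕ → ℝ, (∀ n, 0 ≤ lam n) ∧
    Tendsto lam atTop (nhds 0) ∧ ∀ n, y + lam n • k₀ ∈ A}

/-- **Lemma 3.2 (i), (ii).** Strict and non-strict sublevel sets of the Gerstewitz
function:  `ξ_{k₀}(y) < r ↔ y ∈ r k₀ - (D + (0,∞) k₀)` and
`ξ_{k₀}(y) ≤ r ↔ y ∈ r k₀ - vcl_{k₀}(D)`. -/
theorem gerstewitz_sublevel {Y : Type*} [AddCommGroup Y] [Module ℝ Y]
    (D : Set Y) (hDadd : D + D ⊆ D) (hDsmul : ∀ α : ℝ, 0 ≤ α → α • D ⊆ D)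
    (k₀ : Y) (hk₀ : k₀ ∈ D) (hk₀' : k₀ ∉ -vcl D) (y : Y) (r : ℝ) :
    (gerstewitz D k₀ y < (r : EReal) ↔
      ∃ d ∈ D, ∃ s : ℝ, 0 < s ∧ y = r • k₀ - (d + s • k₀)) ∧
    (gerstewitz D k₀ y ≤ (r : EReal) ↔ r • k₀ - y ∈ vclDir k₀ D) := by
  set S : Set EReal := {t : EReal | ∃ r' : ℝ, t = (r' : EReal) ∧ r' • k₀ - y ∈ D} with hS
  have hconeD : ∀ d ∈ D, ∀ c : ℝ, 0 ≤ c → d + c • k₀ ∈ D := by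
    intro d hd c hc
    exact hDadd (Set.add_mem_add hd (hDsmul c hc (Set.smul_mem_smul_set hk₀)))
  constructor
  · constructor
    · intro h
      rw [gerstewitz, sInf_lt_iff] at h
      obtain ⟨t, ⟨r', rfl, hr'D⟩, hlt⟩ := h
      rw [EReal.coe_lt_coe_iff] at hlt
      refine ⟨r' • k₀ - y, hr'D, r - r', by linarith, by module⟩
    · rintro ⟨d, hd, s, hs, rfl⟩
      have hmem : ((r - s : ℝ) : EReal) ∈ S := by
        refine ⟨r - s, rfl, ?_⟩
        have : (r - s) • k₀ - (r • k₀ - (d + s • k₀)) = d := by module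
        rw [this]; exact hd
      calc gerstewitz D k₀ (r • k₀ - (d + s • k₀)) ≤ ((r - s : ℝ) : EReal) := sInf_le hmem
        _ < (r : EReal) := by rw [EReal.coe_lt_coe_iff]; linarith
  · constructor
    · intro h
      have key : ∀ n : ℕ, ∃ lam : ℝ, 0 ≤ lam ∧ lam ≤ 1 / (n + 1) ∧
          (r • k₀ - y) + lam • k₀ ∈ D := by
        intro n
        have hpos : (0 : ℝ) < 1 / (n + 1) := by positivity
        have hlt : gerstewitz D k₀ y < ((r + 1 / (n + 1) : ℝ) : EReal) := by
          refine lt_of_le_of_lt h ?_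
          rw [EReal.coe_lt_coe_iff]; linarith
        rw [gerstewitz, sInf_lt_iff] at hlt
        obtain ⟨t, ⟨r', rfl, hr'D⟩, hlt⟩ := hlt
        rw [EReal.coe_lt_coe_iff] at hlt
        refine ⟨max (r' - r) 0, le_max_right _ _, by
          simp only [max_le_iff]; constructor <;> [linarith; positivity], ?_⟩
        have h1 : (r • k₀ - y) + (max (r' - r) 0) • k₀ =
            (r' • k₀ - y) + (r + max (r' - r) 0 - r') • k₀ := by module
        rw [h1]
        exact hconeD _ hr'D _ (by have := le_max_left (r' - r) (0 : ℝ); linarith)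
      choose lam h0 h1 hmem using key
      refine ⟨lam, h0, ?_, hmem⟩
      refine squeeze_zero h0 h1 ?_
      exact tendsto_one_div_add_atTop_nhds_zero_nat
    · rintro ⟨lam, h0, hlim, hmem⟩
      by_contra h
      push_neg at h
      obtain ⟨x, hrx, hxg⟩ := EReal.lt_iff_exists_real_btwn.mp h
      rw [EReal.coe_lt_coe_iff] at hrx
      obtain ⟨n, hn⟩ := (hlim.eventually (eventually_lt_nhds (by linarith : (0:ℝ) < x - r))).exists
      have hmemS : ((r + lam n : ℝ) : EReal) ∈ S := by
        refine ⟨r + lam n, rfl, ?_⟩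
        have : (r + lam n) • k₀ - y = (r • k₀ - y) + lam n • k₀ := by module
        rw [this]; exact hmem n
      have : gerstewitz D k₀ y ≤ ((r + lam n : ℝ) : EReal) := sInf_le hmemS
      have hlt2 : ((r + lam n : ℝ) : EReal) < (x : EReal) := by
        rw [EReal.coe_lt_coe_iff]; linarith
      exact absurd (lt_of_le_of_lt this hlt2) (not_lt.mpr hxg.le)
end

section
/- Let (X,d) be a metric space, Y a locally convex space, D ⊆ Y a convex cone, and k₀ ∈ D \ (−vcl(D)). Let f : X → nonempty subsets of Y be D-sequentially lower monotone and have D-k₀-closed values (f(x)+D is k₀-closed for all x). Suppose x₀ ∈ X and ε > 0 with f(x₀) ⊄ f(X) + εk₀ + D, and fix λ > 0; suppose (X,d) is S(x₀)-dynamically complete where S(x₀) = {x : f(x₀) ⊆ f(x) + (ε/λ)d(x,x₀)k₀ + D}. Then there exists x̂ ∈ X such that: (a) f(x₀) ⊆ f(x̂) + (ε/λ)d(x̂,x₀)k₀ + D; (b) for all x ≠ x̂, f(x̂) ⊄ f(x) + (ε/λ)d(x,x̂)k₀ + D; (c) d(x₀,x̂) ≤ λ. -/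
open Pointwise Filter Topology

section Aux
variable {Y : Type*} [AddCommGroup Y] [Module ℝ Y]

/-- `B ⊆ A + c•k₀ + D`, elementwise. -/
def Below (D : Set Y) (k₀ : Y) (A B : Set Y) (c : ℝ) : Prop :=
  ∀ y ∈ B, ∃ v ∈ A, ∃ w ∈ D, y = v + c • k₀ + w

lemma below_iff (D : Set Y) (k₀ : Y) (A B : Set Y) (c : ℝ) :
    B ⊆ A + {c • k₀} + D ↔ Below D k₀ A B c := by
  constructor
  · intro h y hy
    obtain ⟨t, ht, w, hw, rfl⟩ := h hy
    obtain ⟨v, hv, s, hs, rfl⟩ := ht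
    rw [Set.mem_singleton_iff] at hs
    exact ⟨v, hv, w, hw, by rw [hs]⟩
  · intro h y hy
    obtain ⟨v, hv, w, hw, rfl⟩ := h y hy
    exact ⟨v + c • k₀, ⟨v, hv, c • k₀, rfl, rfl⟩, w, hw, rfl⟩

variable {D : Set Y} {k₀ : Y} (hDadd : D + D ⊆ D) (hDsmul : ∀ α : ℝ, 0 ≤ α → α • D ⊆ D)
  (hk₀ : k₀ ∈ D)

include hDsmul hk₀ in
lemma smul_k₀_mem (c : ℝ) (hc : 0 ≤ c) : c • k₀ ∈ D :=
  hDsmul c hc ⟨k₀, hk₀, rfl⟩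

include hDadd in
omit [Module ℝ Y] in
lemma D_add_mem {a b : Y} (ha : a ∈ D) (hb : b ∈ D) : a + b ∈ D :=
  hDadd ⟨a, ha, b, hb, rfl⟩

include hDadd hDsmul hk₀ in
lemma below_mono {A B : Set Y} {c c' : ℝ} (hcc : c' ≤ c)
    (h : Below D k₀ A B c) : Below D k₀ A B c' := by
  intro y hy
  obtain ⟨v, hv, w, hw, rfl⟩ := h y hy
  refine ⟨v, hv, (c - c') • k₀ + w,
    D_add_mem hDadd (smul_k₀_mem hDsmul hk₀ _ (by linarith)) hw, ?_⟩
  have : c • k₀ = c' • k₀ + (c - c') • k₀ := by rw [← add_smul]; ring_nf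
  rw [this]; abel

include hDadd in
lemma below_trans {A B C : Set Y} {c₁ c₂ : ℝ}
    (h₁ : Below D k₀ A B c₁) (h₂ : Below D k₀ B C c₂) : Below D k₀ A C (c₁ + c₂) := by
  intro y hy
  obtain ⟨v, hv, w, hw, rfl⟩ := h₂ y hy
  obtain ⟨v', hv', w', hw', rfl⟩ := h₁ v hv
  refine ⟨v', hv', w' + w, D_add_mem hDadd hw' hw, ?_⟩
  rw [add_smul]; abel

lemma below_refl {A : Set Y} (h0 : (0:Y) ∈ D) : Below D k₀ A A 0 := by
  intro y hy
  exact ⟨y, hy, 0, h0, by simp⟩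

end Aux

/-- **Corollary 3.6** ([41, Theorem 3.1] improved). -/
theorem setvalued_EVP_k0closed {X Y : Type*} [MetricSpace X]
    [AddCommGroup Y] [Module ℝ Y] [TopologicalSpace Y] [IsTopologicalAddGroup Y]
    [ContinuousSMul ℝ Y] [LocallyConvexSpace ℝ Y]
    (D : Set Y) (hDadd : D + D ⊆ D) (hDsmul : ∀ α : ℝ, 0 ≤ α → α • D ⊆ D)
    (k₀ : Y) (hk₀ : k₀ ∈ D) (hk₀' : k₀ ∉ -vcl D)
    (f : X → Set Y) (hf : ∀ x, (f x).Nonempty)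
    (hslm : ∀ (xs : ℕ → X) (xbar : X), (∀ n, f (xs n) ⊆ f (xs (n + 1)) + D) →
      Tendsto xs atTop (nhds xbar) → ∀ n, f (xs n) ⊆ f xbar + D)
    (hclv : ∀ x : X, vclDir k₀ (f x + D) ⊆ f x + D)
    (x₀ : X) (ε : ℝ) (hε : 0 < ε)
    (hx₀ : ¬ f x₀ ⊆ (⋃ x : X, f x) + {ε • k₀} + D)
    (lam : ℝ) (hlam : 0 < lam)
    (S : X → Set X)
    (hS : ∀ x, S x = {x' | f x ⊆ f x' + {((ε / lam) * dist x' x) • k₀} + D})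
    (hcomplete : ∀ xs : ℕ → X, (∀ n, xs n ∈ S x₀) →
      (∀ n, S (xs (n + 1)) ⊆ S (xs n)) → (∀ n, S (xs n) ⊆ S x₀) →
      CauchySeq xs → ∃ u : X, Tendsto xs atTop (nhds u)) :
    ∃ xhat : X,
      (f x₀ ⊆ f xhat + {((ε / lam) * dist xhat x₀) • k₀} + D) ∧
      (∀ x : X, x ≠ xhat → ¬ f xhat ⊆ f x + {((ε / lam) * dist x xhat) • k₀} + D) ∧
      dist x₀ xhat ≤ lam := by
  have hγ : 0 < ε / lam := div_pos hε hlam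
  have hD0 : (0:Y) ∈ D := by
    simpa using smul_k₀_mem hDsmul hk₀ 0 le_rfl
  have hSmem : ∀ x' x : X, x' ∈ S x ↔ Below D k₀ (f x') (f x) ((ε / lam) * dist x' x) := by
    intro x' x
    rw [hS x]
    exact below_iff D k₀ (f x') (f x) _
  -- the "deep point" from the non-domination hypothesis
  have hy₀ : ∃ y₀ ∈ f x₀, ∀ (x : X), ∀ v ∈ f x, ∀ w ∈ D, y₀ ≠ v + ε • k₀ + w := by
    rw [Set.not_subset] at hx₀
    obtain ⟨y₀, hy₀f, hn⟩ := hx₀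
    refine ⟨y₀, hy₀f, fun x v hv w hw heq => hn ?_⟩
    rw [heq]
    exact Set.add_mem_add (Set.add_mem_add (Set.mem_iUnion.2 ⟨x, hv⟩) rfl) hw
  obtain ⟨y₀, hy₀f, hy₀⟩ := hy₀
  have hbudget : ∀ (c : ℝ) (x : X), Below D k₀ (f x) (f x₀) c → c ≤ ε := by
    intro c x h
    by_contra hlt
    push_neg at hlt
    obtain ⟨v, hv, w, hw, heq⟩ := h y₀ hy₀f
    refine hy₀ x v hv ((c - ε) • k₀ + w)
      (D_add_mem hDadd (smul_k₀_mem hDsmul hk₀ _ (by linarith)) hw) ?_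
    rw [heq, show c • k₀ = ε • k₀ + (c - ε) • k₀ by rw [← add_smul]; ring_nf]
    abel
  have hcoeff : ∀ d : ℝ, (ε / lam) * d ≤ ε → d ≤ lam := by
    intro d h
    rw [div_mul_eq_mul_div, div_le_iff₀ hlam] at h
    exact le_of_mul_le_mul_left h hε
  have hSrefl : ∀ x : X, x ∈ S x := by
    intro x
    rw [hSmem, dist_self, mul_zero]
    exact below_refl hD0
  have hStrans : ∀ x' x : X, x' ∈ S x → S x' ⊆ S x := by
    intro x' x hx' x'' hx''
    rw [hSmem] at hx' hx'' ⊢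
    have htri : (ε / lam) * dist x'' x ≤ (ε / lam) * dist x'' x' + (ε / lam) * dist x' x := by
      rw [← mul_add]
      exact mul_le_mul_of_nonneg_left (dist_triangle _ _ _) hγ.le
    exact below_mono hDadd hDsmul hk₀ htri (below_trans hDadd hx'' hx')
  have hball : ∀ x ∈ S x₀, dist x x₀ ≤ lam := by
    intro x hx
    rw [hSmem] at hx
    exact hcoeff _ (hbudget _ _ hx)
  have hbound : ∀ x ∈ S x₀, ∀ z ∈ S x, dist z x ≤ lam := by
    intro x hx z hz
    rw [hSmem] at hx hz
    have h := hbudget _ _ (below_trans hDadd hz hx)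
    have h2 : (ε / lam) * dist z x ≤ ε := by
      have : 0 ≤ (ε / lam) * dist x x₀ := mul_nonneg hγ.le dist_nonneg
      linarith
    exact hcoeff _ h2
  -- selection of almost-maximally-distant successors
  have hkey : ∀ (x : X) (n : ℕ), ∃ x', x' ∈ S x ∧
      (x ∈ S x₀ → ∀ z ∈ S x, dist z x ≤ dist x' x + (1/2 : ℝ)^n) := by
    intro x n
    by_cases hx : x ∈ S x₀
    · have hne : ((fun z => dist z x) '' S x).Nonempty := ⟨dist x x, x, hSrefl x, rfl⟩
      have hbdd : BddAbove ((fun z => dist z x) '' S x) := by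
        refine ⟨lam, ?_⟩
        rintro t ⟨z, hz, rfl⟩
        exact hbound x hx z hz
      have hlt : sSup ((fun z => dist z x) '' S x) - (1/2 : ℝ)^n
          < sSup ((fun z => dist z x) '' S x) := by
        have : (0:ℝ) < (1/2 : ℝ)^n := by positivity
        linarith
      obtain ⟨t, ⟨z, hz, rfl⟩, hzlt⟩ := exists_lt_of_lt_csSup hne hlt
      refine ⟨z, hz, fun _ z' hz' => ?_⟩
      have := le_csSup hbdd ⟨z', hz', rfl⟩
      linarith
    · exact ⟨x, hSrefl x, fun h => absurd h hx⟩
  choose g hg1 hg2 using hkey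
  let xs : ℕ → X := fun n => Nat.rec (motive := fun _ => X) x₀ (fun m ih => g ih m) n
  have hxs0 : xs 0 = x₀ := rfl
  have hstep : ∀ n, xs (n + 1) ∈ S (xs n) := fun n => hg1 (xs n) n
  have hmem0 : ∀ n, xs n ∈ S x₀ := by
    intro n
    induction n with
    | zero => exact hSrefl x₀
    | succ n ih => exact hStrans (xs n) x₀ ih (hstep n)
  have hnear : ∀ n, ∀ z ∈ S (xs n), dist z (xs n) ≤ dist (xs (n + 1)) (xs n) + (1/2 : ℝ)^n :=
    fun n => hg2 (xs n) n (hmem0 n)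
  have hchain : ∀ n m, xs (n + m) ∈ S (xs n) := by
    intro n m
    induction m with
    | zero => exact hSrefl _
    | succ m ih => exact hStrans (xs (n + m)) (xs n) ih (hstep (n + m))
  have hb : ∀ n, Below D k₀ (f (xs n)) (f x₀)
      ((ε / lam) * ∑ i ∈ Finset.range n, dist (xs (i + 1)) (xs i)) := by
    intro n
    induction n with
    | zero => simpa [hxs0] using below_refl (A := f x₀) (k₀ := k₀) hD0
    | succ n ih =>
      have h1 := (hSmem _ _).1 (hstep n)
      have h2 := below_trans hDadd h1 ih
      exact below_mono hDadd hDsmul hk₀ (le_of_eq (by rw [Finset.sum_range_succ]; ring)) h2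
  have hsum : ∀ n, ∑ i ∈ Finset.range n, dist (xs (i + 1)) (xs i) ≤ lam :=
    fun n => hcoeff _ (hbudget _ _ (hb n))
  have hsumm : Summable (fun n => dist (xs n) (xs (n + 1))) := by
    refine summable_of_sum_range_le (c := lam) (fun n => dist_nonneg) (fun n => ?_)
    refine le_trans (le_of_eq (Finset.sum_congr rfl fun i _ => dist_comm _ _)) (hsum n)
  have hcauchy : CauchySeq xs := cauchySeq_of_summable_dist hsumm
  obtain ⟨u, hu⟩ := hcomplete xs hmem0 (fun n => hStrans _ _ (hstep n))
    (fun n => hStrans _ _ (hmem0 n)) hcauchy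
  have hfd : ∀ n, f (xs n) ⊆ f u + D := by
    refine hslm xs u (fun n => ?_) hu
    intro y hy
    obtain ⟨v, hv, w, hw, rfl⟩ := (hSmem _ _).1 (hstep n) y hy
    refine Set.mem_add.2 ⟨v, hv, ((ε / lam) * dist (xs (n + 1)) (xs n)) • k₀ + w,
      D_add_mem hDadd (smul_k₀_mem hDsmul hk₀ _ (mul_nonneg hγ.le dist_nonneg)) hw, by abel⟩
  have hscal : ∀ a b : ℝ, a - b + max (b - a) 0 = max (a - b) 0 := by
    intro a b
    rcases le_total a b with h | h
    · rw [max_eq_left (by linarith), max_eq_right (by linarith)]; ring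
    · rw [max_eq_right (by linarith), max_eq_left (by linarith)]; ring
  have hUmem : ∀ n, u ∈ S (xs n) := by
    intro n
    rw [hSmem]
    intro y hy
    have hz : (y - ((ε / lam) * dist u (xs n)) • k₀) ∈ vclDir k₀ (f u + D) := by
      refine ⟨fun m => (ε / lam) * max (dist u (xs n) - dist (xs (n + m)) (xs n)) 0,
        fun m => mul_nonneg hγ.le (le_max_right _ _), ?_, ?_⟩
      · have h1 : Tendsto (fun m => dist u (xs (n + m))) atTop (nhds 0) := by
          have h2 : Tendsto (fun m => xs (n + m)) atTop (nhds u) := by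
            refine hu.comp ?_
            simpa [Nat.add_comm] using tendsto_add_atTop_nat n
          have := tendsto_iff_dist_tendsto_zero.1 h2
          simpa [dist_comm] using this
        refine squeeze_zero (fun m => mul_nonneg hγ.le (le_max_right _ _)) (fun m => ?_)
          (by simpa using h1.const_mul (ε / lam))
        refine mul_le_mul_of_nonneg_left (max_le ?_ dist_nonneg) hγ.le
        have := dist_triangle u (xs (n + m)) (xs n)
        linarith
      · intro m
        obtain ⟨v, hv, w, hw, hyeq⟩ := (hSmem _ _).1 (hchain n m) y hy
        obtain ⟨v', hv', w', hw', hveq⟩ := Set.mem_add.1 (hfd (n + m) hv)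
        refine Set.mem_add.2 ⟨v', hv',
          ((ε / lam) * max (dist (xs (n + m)) (xs n) - dist u (xs n)) 0) • k₀ + (w' + w),
          D_add_mem hDadd (smul_k₀_mem hDsmul hk₀ _ (mul_nonneg hγ.le (le_max_right _ _)))
            (D_add_mem hDadd hw' hw), ?_⟩
        have e1 : ((ε / lam) * dist (xs (n + m)) (xs n)) • k₀
            - ((ε / lam) * dist u (xs n)) • k₀
            + ((ε / lam) * max (dist u (xs n) - dist (xs (n + m)) (xs n)) 0) • k₀
            = ((ε / lam) * max (dist (xs (n + m)) (xs n) - dist u (xs n)) 0) • k₀ := by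
          rw [← sub_smul, ← add_smul]
          congr 1
          linear_combination (ε / lam) * hscal (dist (xs (n + m)) (xs n)) (dist u (xs n))
        rw [hyeq, ← hveq, ← e1]
        abel
    obtain ⟨v, hv, w, hw, hveq⟩ := Set.mem_add.1 (hclv u hz)
    refine ⟨v, hv, w, hw, ?_⟩
    have h3 : y = v + w + ((ε / lam) * dist u (xs n)) • k₀ := eq_add_of_sub_eq hveq.symm
    rw [h3]; abel
  have huS0 : u ∈ S x₀ := hUmem 0
  refine ⟨u, ?_, ?_, ?_⟩
  · have := huS0
    rw [hS] at this
    exact this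
  · intro x hxne hxmem
    have hxSu : x ∈ S u := by rw [hS]; exact hxmem
    have hxall : ∀ n, x ∈ S (xs n) := fun n => hStrans u (xs n) (hUmem n) hxSu
    have hdle : ∀ n, dist x (xs n) ≤ dist (xs (n + 1)) (xs n) + (1/2 : ℝ)^n :=
      fun n => hnear n x (hxall n)
    have hd0 : Tendsto (fun n => dist (xs (n + 1)) (xs n)) atTop (nhds 0) := by
      have := hsumm.tendsto_atTop_zero
      simpa [dist_comm] using this
    have hpow : Tendsto (fun n : ℕ => (1/2 : ℝ)^n) atTop (nhds 0) :=
      tendsto_pow_atTop_nhds_zero_of_lt_one (by norm_num) (by norm_num)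
    have hxd : Tendsto (fun n => dist x (xs n)) atTop (nhds 0) :=
      squeeze_zero (fun n => dist_nonneg) hdle (by simpa using hd0.add hpow)
    have hxlim : Tendsto xs atTop (nhds x) :=
      tendsto_iff_dist_tendsto_zero.2 (by simpa [dist_comm] using hxd)
    exact hxne (tendsto_nhds_unique hxlim hu)
  · rw [dist_comm]
    exact hball u huS0
end

section
/- Every set-valued map f : X → nonempty subsets of Y (X a metric space, Y a topological vector space, D a convex cone) whose epigraph epi f = {(x,y) : y ∈ f(x) + D} is closed in X × Y is D-sequentially lower monotone. Conversely, there exists a D-sequentially lower monotone set-valued map with D-closed values whose epigraph is not closed: with X = Y = ℝ, D = [0,∞), the map f(x) = [x+1, ∞) for x ≥ 0 and f(x) = {x} for x < 0 is D-s.l.m., has D-closed values, but epi f is not closed. -/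
open Pointwise Filter Topology

/-- `f` is `D`-sequentially lower monotone. -/
def DSLM {X Y : Type*} [TopologicalSpace X] [AddCommGroup Y]
    (D : Set Y) (f : X → Set Y) : Prop :=
  ∀ (xs : ℕ → X) (xbar : X), (∀ n, f (xs n) ⊆ f (xs (n + 1)) + D) →
    Tendsto xs atTop (nhds xbar) → ∀ n, f (xs n) ⊆ f xbar + D

/-- The example map of Example 4.1. -/
noncomputable def exampleMap (x : ℝ) : Set ℝ :=
  if 0 ≤ x then Set.Ici (x + 1) else {x}

/-- Auxiliary: the lower endpoint of `exampleMap x + Ici 0`. -/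
noncomputable def gg (x : ℝ) : ℝ := if 0 ≤ x then x + 1 else x

lemma exampleMap_add (x : ℝ) : exampleMap x + Set.Ici (0:ℝ) = Set.Ici (gg x) := by
  unfold exampleMap gg
  split_ifs with h
  · ext y
    simp only [Set.mem_add, Set.mem_Ici]
    constructor
    · rintro ⟨a, ha, d, hd, rfl⟩; linarith
    · intro hy; exact ⟨x + 1, le_refl _, y - (x+1), by linarith, by ring⟩
  · ext y
    simp only [Set.mem_add, Set.mem_singleton_iff, Set.mem_Ici]
    constructor
    · rintro ⟨a, rfl, d, hd, rfl⟩; linarith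
    · intro hy; exact ⟨x, rfl, y - x, by linarith, by ring⟩

lemma Ici_add_zero (a : ℝ) : Set.Ici a + Set.Ici (0:ℝ) = Set.Ici a := by
  ext y
  simp only [Set.mem_add, Set.mem_Ici]
  constructor
  · rintro ⟨b, hb, d, hd, rfl⟩; linarith
  · intro hy; exact ⟨a, le_refl _, y - a, by linarith, by ring⟩

lemma exampleMap_subset (x : ℝ) : exampleMap x ⊆ Set.Ici (gg x) := by
  rw [← exampleMap_add]
  intro y hy
  exact ⟨y, hy, 0, Set.self_mem_Ici, add_zero y⟩

lemma gg_neg {x : ℝ} (h : x < 0) : gg x = x := by unfold gg; rw [if_neg (not_le.2 h)]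

lemma gg_nonneg {x : ℝ} (h : 0 ≤ x) : gg x = x + 1 := by unfold gg; rw [if_pos h]

lemma example_slm : DSLM (Set.Ici (0 : ℝ)) exampleMap := by
  intro xs xbar hm hlim n
  rw [exampleMap_add]
  intro y hy
  have hy' : gg (xs n) ≤ y := exampleMap_subset _ hy
  have anti : Antitone (fun m => gg (xs m)) := by
    apply antitone_nat_of_succ_le
    intro m
    have h1 : Set.Ici (gg (xs m)) ⊆ Set.Ici (gg (xs (m+1))) := by
      rw [← exampleMap_add, ← exampleMap_add]
      calc exampleMap (xs m) + Set.Ici (0:ℝ)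
          ⊆ (exampleMap (xs (m+1)) + Set.Ici (0:ℝ)) + Set.Ici (0:ℝ) :=
            Set.add_subset_add_right (hm m)
        _ = exampleMap (xs (m+1)) + Set.Ici (0:ℝ) := by
            rw [exampleMap_add, Ici_add_zero, ← exampleMap_add]
    exact h1 Set.self_mem_Ici
  suffices h : gg xbar ≤ gg (xs n) from le_trans h hy'
  have tail : ∀ m0, xs m0 < 0 → ∀ p, m0 ≤ p → xs p < 0 ∧ xs p ≤ xs m0 := by
    intro m0 hm0 p hp
    have hle : gg (xs p) ≤ gg (xs m0) := anti hp
    rw [gg_neg hm0] at hle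
    have hxp : xs p < 0 := by
      by_contra hc
      push_neg at hc
      rw [gg_nonneg hc] at hle
      linarith
    rw [gg_neg hxp] at hle
    exact ⟨hxp, hle⟩
  by_cases hx : ∃ m, xs m < 0
  · obtain ⟨m0, hm0⟩ := hx
    set M := max m0 n with hM
    have hMneg : xs M < 0 := (tail m0 hm0 M (le_max_left _ _)).1
    have hxbar : xbar ≤ xs M :=
      le_of_tendsto hlim (eventually_atTop.2 ⟨M, fun p hp => (tail M hMneg p hp).2⟩)
    have hxbarneg : xbar < 0 := lt_of_le_of_lt hxbar hMneg
    have h2 : gg (xs M) ≤ gg (xs n) := anti (le_max_right _ _)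
    rw [gg_neg hxbarneg]
    rw [gg_neg hMneg] at h2
    linarith
  · push_neg at hx
    have hxbar0 : 0 ≤ xbar := ge_of_tendsto hlim (Eventually.of_forall hx)
    have hxle : xbar ≤ xs n := by
      refine le_of_tendsto hlim (eventually_atTop.2 ⟨n, fun p hp => ?_⟩)
      have := anti hp
      simp only at this
      rw [gg_nonneg (hx p), gg_nonneg (hx n)] at this
      linarith
    rw [gg_nonneg hxbar0, gg_nonneg (hx n)]
    linarith

/-- **Remark 4.2 and Example 4.1.** A closed epigraph implies `D`-sequential lower
monotonicity, but not conversely: the map `exampleMap` is `D`-s.l.m. with `D`-closed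
values while its epigraph is not closed. -/
theorem closed_epigraph_implies_slm_and_counterexample :
    (∀ (X Y : Type*) [MetricSpace X] [AddCommGroup Y] [Module ℝ Y]
      [TopologicalSpace Y] [IsTopologicalAddGroup Y] [ContinuousSMul ℝ Y]
      (D : Set Y), D + D ⊆ D → (∀ α : ℝ, 0 ≤ α → α • D ⊆ D) →
      ∀ f : X → Set Y, (∀ x, (f x).Nonempty) →
        IsClosed {p : X × Y | p.2 ∈ f p.1 + D} → DSLM D f) ∧
    (DSLM (Set.Ici (0 : ℝ)) exampleMap ∧
      (∀ x : ℝ, IsClosed (exampleMap x + Set.Ici (0 : ℝ))) ∧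
      ¬ IsClosed {p : ℝ × ℝ | p.2 ∈ exampleMap p.1 + Set.Ici (0 : ℝ)}) := by
  refine ⟨?_, example_slm, ?_, ?_⟩
  · intro X Y _ _ _ _ _ _ D hDD _ f _ hcl xs xbar hm hlim n y hy
    have key : ∀ k, y ∈ f (xs (k + (n+1))) + D := by
      intro k
      induction k with
      | zero => simpa using hm n hy
      | succ k ih =>
        rw [Set.mem_add] at ih
        obtain ⟨a, ha, d, hd, rfl⟩ := ih
        have := hm (k + (n+1)) ha
        rw [Set.mem_add] at this
        obtain ⟨b, hb, d', hd', rfl⟩ := this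
        have hidx : k + 1 + (n+1) = k + (n+1) + 1 := by omega
        rw [hidx]
        have : b + d' + d = b + (d' + d) := add_assoc b d' d
        rw [this]
        exact Set.add_mem_add hb (hDD (Set.add_mem_add hd' hd))
    have ht : Tendsto (fun k => ((xs (k + (n+1)), y) : X × Y)) atTop (nhds (xbar, y)) :=
      (hlim.comp (tendsto_add_atTop_nat (n+1))).prodMk_nhds tendsto_const_nhds
    exact hcl.mem_of_tendsto ht (Eventually.of_forall key)
  · intro x
    rw [exampleMap_add]
    exact isClosed_Ici
  · intro hcl
    have hmem : ((0:ℝ),(0:ℝ)) ∈ {p : ℝ × ℝ | p.2 ∈ exampleMap p.1 + Set.Ici (0:ℝ)} := by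
      have hneg : ∀ n : ℕ, (-(1/(n+1)) : ℝ) < 0 := by
        intro n
        have : (0:ℝ) < 1/(n+1) := by positivity
        linarith
      have h0 : Tendsto (fun n : ℕ => (-(1/(n+1)) : ℝ)) atTop (nhds 0) := by
        have := (tendsto_one_div_add_atTop_nhds_zero_nat (𝕜 := ℝ)).neg
        simpa using this
      have ht : Tendsto (fun n : ℕ => ((-(1/(n+1)), -(1/(n+1))) : ℝ × ℝ)) atTop
          (nhds ((0:ℝ), (0:ℝ))) := h0.prodMk_nhds h0
      refine hcl.mem_of_tendsto ht (Eventually.of_forall fun k => ?_)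
      show (-(1/(k+1)) : ℝ) ∈ exampleMap (-(1/(k+1))) + Set.Ici (0:ℝ)
      rw [exampleMap_add, gg_neg (hneg k)]
      exact Set.self_mem_Ici
    rw [Set.mem_setOf_eq, exampleMap_add, gg_nonneg (le_refl 0)] at hmem
    simp at hmem
    linarith [hmem]
end

section
/- Let (X,d) be a complete metric space, x₀ ∈ X, Y a locally convex space, D ⊆ Y a convex cone, H ⊆ D \ {0} a σ-convex (cs-complete) convex set, and f : X → nonempty subsets of Y. Assume: there exists ξ ∈ Y* with inf ξ(H) > 0 and ξ ≥ 0 on D, ξ lower bounded on f(S(x₀)) where S(x₀) = {x : f(x₀) ⊆ f(x) + γd(x,x₀)H + D}; and f is D-sequentially lower monotone with D-closed values. Then for any γ > 0 there exists x̂ ∈ X with: (a) f(x₀) ⊆ f(x̂) + γd(x̂,x₀)H + D; (b) for every x ≠ x̂, f(x̂) ⊄ f(x) + γd(x,x̂)H + D. -/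
open Pointwise Filter Topology

/-- A set `H` is σ-convex (cs-complete) if every convex series of its points
converges to a point of `H`. -/
def SigmaConvex {Y : Type*} [AddCommGroup Y] [Module ℝ Y] [TopologicalSpace Y]
    (H : Set Y) : Prop :=
  ∀ (x : ℕ → Y) (lam : ℕ → ℝ), (∀ n, x n ∈ H) → (∀ n, 0 ≤ lam n) →
    Tendsto (fun N => ∑ n ∈ Finset.range N, lam n) atTop (nhds 1) →
    ∃ h ∈ H, Tendsto (fun N => ∑ n ∈ Finset.range N, lam n • x n) atTop (nhds h)

private lemma mem3_iff {Y : Type*} [AddCommGroup Y] [Module ℝ Y] {A H D : Set Y} {c : ℝ}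
    {y : Y} : y ∈ A + c • H + D ↔ ∃ a ∈ A, ∃ h ∈ H, ∃ e ∈ D, y = a + c • h + e := by
  constructor
  · rintro ⟨w, ⟨a, ha, b, ⟨h, hh, rfl⟩, rfl⟩, ed, hed, rfl⟩
    exact ⟨a, ha, h, hh, ed, hed, rfl⟩
  · rintro ⟨a, ha, h, hh, ed, hed, rfl⟩
    exact ⟨a + c • h, ⟨a, ha, c • h, ⟨h, hh, rfl⟩, rfl⟩, ed, hed, rfl⟩

private lemma aux1 {Y : Type*} [AddCommGroup Y] (p q r s : Y) :
    p + (q + s) = p + q + r + s - r := by abel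

private lemma aux2 {Y : Type*} [AddCommGroup Y] (p q a b : Y) :
    (p + q) + (a + b) = p + a + (q + b) := by abel

private lemma aux3 {Y : Type*} [AddCommGroup Y] (y s : Y) : y = (y - s) + s := by abel

/-- **Theorem 4.2.** Set-valued EVP with a σ-convex perturbation set. -/
theorem setvalued_EVP_sigma_convex {X Y : Type*} [MetricSpace X] [CompleteSpace X]
    [AddCommGroup Y] [Module ℝ Y] [TopologicalSpace Y] [IsTopologicalAddGroup Y]
    [ContinuousSMul ℝ Y] [LocallyConvexSpace ℝ Y]
    (D : Set Y) (hDadd : D + D ⊆ D) (hDsmul : ∀ α : ℝ, 0 ≤ α → α • D ⊆ D)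
    (H : Set Y) (hHD : H ⊆ D \ {0}) (hHconv : Convex ℝ H) (hHσ : SigmaConvex H)
    (f : X → Set Y) (hf : ∀ x, (f x).Nonempty)
    (x₀ : X) (γ : ℝ) (hγ : 0 < γ)
    (S : X → Set X)
    (hS : ∀ x, S x = {x' | f x ⊆ f x' + (γ * dist x' x) • H + D})
    (ξ : Y →L[ℝ] ℝ) (hξH : 0 < sInf (ξ '' H)) (hξD : ∀ d ∈ D, 0 ≤ ξ d)
    (hbd : ∃ c : ℝ, ∀ y ∈ ⋃ x ∈ S x₀, f x, c ≤ ξ y)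
    (hslm : ∀ (xs : ℕ → X) (xbar : X), (∀ n, f (xs n) ⊆ f (xs (n + 1)) + D) →
      Tendsto xs atTop (nhds xbar) → ∀ n, f (xs n) ⊆ f xbar + D)
    (hclv : ∀ x : X, IsClosed (f x + D)) :
    ∃ xhat : X,
      (f x₀ ⊆ f xhat + (γ * dist xhat x₀) • H + D) ∧
      (∀ x : X, x ≠ xhat → ¬ f xhat ⊆ f x + (γ * dist x xhat) • H + D) := by
  obtain ⟨c, hc⟩ := hbd
  set α : ℝ := sInf (ξ '' H) with hαdef
  -- basic facts
  have hc' : ∀ x ∈ S x₀, ∀ y ∈ f x, c ≤ ξ y := by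
    intro x hx y hy
    exact hc y (Set.mem_biUnion hx hy)
  have hHne : H.Nonempty := by
    by_contra hne
    rw [Set.not_nonempty_iff_eq_empty] at hne
    rw [hαdef, hne, Set.image_empty, Real.sInf_empty] at hξH
    exact lt_irrefl 0 hξH
  obtain ⟨h₀, hh₀⟩ := hHne
  have hHDsub : ∀ h ∈ H, h ∈ D := fun h hh => (hHD hh).1
  have h0D : (0 : Y) ∈ D := by
    have : (0:ℝ) • h₀ ∈ (0:ℝ) • D := Set.smul_mem_smul_set (hHDsub h₀ hh₀)
    simpa using hDsmul 0 le_rfl this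
  have coneD : ∀ (a : ℝ), 0 ≤ a → ∀ d ∈ D, a • d ∈ D := fun a ha d hd =>
    hDsmul a ha (Set.smul_mem_smul_set hd)
  have addD : ∀ d₁ ∈ D, ∀ d₂ ∈ D, d₁ + d₂ ∈ D := fun d₁ h₁ d₂ h₂ =>
    hDadd (Set.add_mem_add h₁ h₂)
  have hξHlb : ∀ h ∈ H, α ≤ ξ h := by
    intro h hh
    exact csInf_le ⟨0, by rintro r ⟨h', hh', rfl⟩; exact hξD h' (hHDsub h' hh')⟩
      (Set.mem_image_of_mem _ hh)
  have Sdef : ∀ x x' : X, x' ∈ S x ↔ f x ⊆ f x' + (γ * dist x' x) • H + D := by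
    intro x x'; rw [hS]; rfl
  -- combination of two H-terms
  have hcomb : ∀ a b c' : ℝ, 0 ≤ a → 0 ≤ b → 0 ≤ c' → c' ≤ a + b → ∀ h₁ ∈ H, ∀ h₂ ∈ H,
      ∃ h ∈ H, ∃ e ∈ D, a • h₁ + b • h₂ = c' • h + e := by
    intro a b c' ha hb hc0 hcab h₁ hh₁ h₂ hh₂
    by_cases hab : a + b = 0
    · have ha0 : a = 0 := by linarith
      have hb0 : b = 0 := by linarith
      have hc'0 : c' = 0 := le_antisymm (by linarith) hc0
      refine ⟨h₁, hh₁, 0, h0D, by simp [ha0, hb0, hc'0]⟩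
    · have ht : 0 < a + b := lt_of_le_of_ne (by linarith) (Ne.symm hab)
      set g : Y := (a / (a+b)) • h₁ + (b / (a+b)) • h₂ with hgdef
      have hgH : g ∈ H := hHconv hh₁ hh₂ (div_nonneg ha ht.le) (div_nonneg hb ht.le)
        (by field_simp)
      refine ⟨g, hgH, ((a+b) - c') • g, coneD _ (by linarith) g (hHDsub g hgH), ?_⟩
      have : c' • g + ((a+b) - c') • g = (a+b) • g := by
        rw [← add_smul]; ring_nf
      rw [this, hgdef, smul_add, smul_smul, smul_smul,
        mul_div_cancel₀ _ hab, mul_div_cancel₀ _ hab]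
  -- reflexivity
  have hrefl : ∀ x : X, x ∈ S x := by
    intro x
    rw [Sdef]
    intro y hy
    exact mem3_iff.mpr ⟨y, hy, h₀, hh₀, 0, h0D, by simp⟩
  -- transitivity
  have htrans : ∀ x x' x'' : X, x' ∈ S x → x'' ∈ S x' → x'' ∈ S x := by
    intro x x' x'' h1 h2
    rw [Sdef] at h1 h2 ⊢
    intro y hy
    obtain ⟨y', hy', h₁, hh₁, e₁, he₁, eq1⟩ := mem3_iff.mp (h1 hy)
    obtain ⟨y'', hy'', h₂, hh₂, e₂, he₂, eq2⟩ := mem3_iff.mp (h2 hy')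
    have hcle : γ * dist x'' x ≤ (γ * dist x'' x') + (γ * dist x' x) := by
      have := dist_triangle x'' x' x
      nlinarith
    obtain ⟨h, hh, e₃, he₃, eq3⟩ := hcomb (γ * dist x'' x') (γ * dist x' x) (γ * dist x'' x)
      (by positivity) (by positivity) (by positivity) hcle h₂ hh₂ h₁ hh₁
    have e₃eq : e₃ = (γ * dist x'' x') • h₂ + (γ * dist x' x) • h₁ - (γ * dist x'' x) • h := by
      rw [eq3]; abel
    refine mem3_iff.mpr ⟨y'', hy'', h, hh, e₃ + e₂ + e₁, addD _ (addD _ he₃ _ he₂) _ he₁, ?_⟩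
    rw [eq1, eq2, e₃eq]; abel
  -- the scalarizing functional
  set φ : X → ℝ := fun x => sInf (ξ '' f x) with hφdef
  have hbdd : ∀ x ∈ S x₀, BddBelow (ξ '' f x) := by
    intro x hx
    exact ⟨c, by rintro r ⟨y, hy, rfl⟩; exact hc' x hx y hy⟩
  have hφlb : ∀ x ∈ S x₀, c ≤ φ x := by
    intro x hx
    exact le_csInf ((hf x).image _) (by rintro r ⟨y, hy, rfl⟩; exact hc' x hx y hy)
  have hφle : ∀ x ∈ S x₀, ∀ y ∈ f x, φ x ≤ ξ y := by
    intro x hx y hy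
    exact csInf_le (hbdd x hx) (Set.mem_image_of_mem _ hy)
  -- scalarization inequality
  have hscal : ∀ x x' : X, x' ∈ S x → x' ∈ S x₀ →
      φ x' + (γ * α) * dist x' x ≤ φ x := by
    intro x x' hx' hx'0
    refine le_csInf ((hf x).image _) ?_
    rintro r ⟨y, hy, rfl⟩
    obtain ⟨y', hy', h, hh, e, he, eq⟩ := mem3_iff.mp ((Sdef x x').mp hx' hy)
    have h1 : ξ y = ξ y' + (γ * dist x' x) * ξ h + ξ e := by
      rw [eq]; simp [map_add]
    have h2 : φ x' ≤ ξ y' := hφle x' hx'0 y' hy'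
    have h3 : (0:ℝ) ≤ ξ e := hξD e he
    have h4 : α ≤ ξ h := hξHlb h hh
    have h5 : (γ * α) * dist x' x ≤ (γ * dist x' x) * ξ h := by
      have hd : (0:ℝ) ≤ dist x' x := dist_nonneg
      nlinarith [mul_nonneg (mul_nonneg hγ.le hd) (sub_nonneg.2 h4)]
    linarith
  -- construction of the iterates
  have hstep : ∀ (n : ℕ) (x : X), ∃ x', x' ∈ S x ∧
      (x ∈ S x₀ → φ x' ≤ sInf (φ '' S x) + (1/2 : ℝ)^n) := by
    intro n x
    by_cases hx : x ∈ S x₀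
    · have hne : (φ '' S x).Nonempty := ⟨φ x, x, hrefl x, rfl⟩
      have hlt : sInf (φ '' S x) < sInf (φ '' S x) + (1/2:ℝ)^n :=
        lt_add_of_pos_right _ (by positivity)
      obtain ⟨r, ⟨x', hx', rfl⟩, hr⟩ := exists_lt_of_csInf_lt hne hlt
      exact ⟨x', hx', fun _ => hr.le⟩
    · exact ⟨x, hrefl x, fun h => absurd h hx⟩
  choose g hg1 hg2 using hstep
  obtain ⟨u, hu0, huS, huφ'⟩ : ∃ u : ℕ → X, u 0 = x₀ ∧ (∀ n, u (n+1) ∈ S (u n)) ∧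
      (∀ n, φ (u (n+1)) ≤ sInf (φ '' S (u n)) + (1/2:ℝ)^n ∨ u n ∉ S x₀) := by
    refine ⟨fun n => Nat.rec x₀ (fun n x => g n x) n, rfl, fun n => hg1 n _, fun n => ?_⟩
    by_cases hx : (Nat.rec x₀ (fun n x => g n x) n : X) ∈ S x₀
    · exact Or.inl (hg2 n _ hx)
    · exact Or.inr hx
  have huS0 : ∀ n, u n ∈ S x₀ := by
    intro n
    induction n with
    | zero => rw [hu0]; exact hrefl x₀
    | succ n ih => exact htrans x₀ (u n) (u (n+1)) ih (huS n)
  have huφ : ∀ n, φ (u (n+1)) ≤ sInf (φ '' S (u n)) + (1/2:ℝ)^n :=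
    fun n => (huφ' n).resolve_right (not_not_intro (huS0 n))
  set K : ℝ := γ * α with hKdef
  have hK : 0 < K := mul_pos hγ hξH
  have hmono : ∀ n, φ (u (n+1)) + K * dist (u (n+1)) (u n) ≤ φ (u n) :=
    fun n => hscal (u n) (u (n+1)) (huS n) (huS0 (n+1))
  -- summability of the distances
  have hsum_le : ∀ N, ∑ k ∈ Finset.range N, dist (u k) (u (k+1)) ≤ (φ x₀ - c) / K := by
    intro N
    have key : K * ∑ k ∈ Finset.range N, dist (u (k+1)) (u k) ≤ φ (u 0) - φ (u N) := by
      induction N with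
      | zero => simp
      | succ N ih =>
        rw [Finset.sum_range_succ, mul_add]
        have := hmono N
        linarith
    have hφN : c ≤ φ (u N) := hφlb (u N) (huS0 N)
    have hdc : ∑ k ∈ Finset.range N, dist (u k) (u (k+1))
        = ∑ k ∈ Finset.range N, dist (u (k+1)) (u k) := by
      exact Finset.sum_congr rfl fun k _ => dist_comm _ _
    rw [hdc, le_div_iff₀ hK, mul_comm]
    rw [hu0] at key
    linarith
  have hsummable : Summable (fun n => dist (u n) (u (n+1))) :=
    summable_of_sum_range_le (fun n => dist_nonneg) hsum_le
  obtain ⟨xh, hxh⟩ := cauchySeq_tendsto_of_complete (cauchySeq_of_summable_dist hsummable)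
  -- the monotone chain and its limit
  have hDchain : ∀ m, f (u m) ⊆ f (u (m+1)) + D := by
    intro m y hy
    obtain ⟨y', hy', h, hh, e, he, eq⟩ := mem3_iff.mp ((Sdef _ _).mp (huS m) hy)
    refine ⟨y', hy', (γ * dist (u (m+1)) (u m)) • h + e,
      addD _ (coneD _ (by positivity) h (hHDsub h hh)) _ he, ?_⟩
    rw [eq]; abel
  have hlim : ∀ m, f (u m) ⊆ f xh + D := hslm u xh hDchain hxh
  -- the key lemma: xh ∈ S (u n) for all n
  have hkey : ∀ n, xh ∈ S (u n) := by
    intro n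
    rcases eq_or_ne xh (u n) with hxe | hxe
    · rw [hxe]; exact hrefl _
    · set v : ℕ → X := fun k => u (n + k) with hvdef
      set d : ℕ → ℝ := fun k => dist (v (k+1)) (v k) with hddef
      have hvlim : Tendsto v atTop (nhds xh) := by
        have hmt : Tendsto (fun k => n + k) atTop atTop :=
          tendsto_atTop_mono (fun k => Nat.le_add_left k n) tendsto_id
        exact hxh.comp hmt
      have hdsummable : Summable d := by
        have h1 : Summable (fun k => dist (u (k + n)) (u (k + n + 1))) :=
          (summable_nat_add_iff (f := fun m => dist (u m) (u (m+1))) n).mpr hsummable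
        refine h1.congr fun k => ?_
        simp only [hddef, hvdef]
        rw [dist_comm]
        congr 2 <;> omega
      set σ : ℝ := ∑' k, d k with hσdef
      have hσδ : dist xh (u n) ≤ σ := by
        have := dist_le_tsum_of_dist_le_of_tendsto₀ d
          (fun k => (dist_comm (v k) (v (k+1))).le) hdsummable hvlim
        rw [dist_comm]
        simpa [hvdef] using this
      have hδpos : 0 < dist xh (u n) := dist_pos.mpr hxe
      have hσpos : 0 < σ := lt_of_lt_of_le hδpos hσδ
      have hdsum : Tendsto (fun N => ∑ k ∈ Finset.range N, d k) atTop (nhds σ) :=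
        hdsummable.hasSum.tendsto_sum_nat
      rw [Sdef]
      intro y hy
      -- build the decomposition sequences
      have hdec : ∀ (k : ℕ) (z : Y), ∃ z', z ∈ f (v k) → (z' ∈ f (v (k+1)) ∧
          ∃ h' ∈ H, ∃ e ∈ D, z = z' + (γ * d k) • h' + e) := by
        intro k z
        by_cases hz : z ∈ f (v k)
        · obtain ⟨z', hz', h', hh', e, he, eq⟩ := mem3_iff.mp ((Sdef _ _).mp (huS (n+k)) hz)
          exact ⟨z', fun _ => ⟨hz', h', hh', e, he, eq⟩⟩
        · exact ⟨z, fun hzz => absurd hzz hz⟩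
      choose gd hgd using hdec
      obtain ⟨W, hW0, hWs⟩ : ∃ W : ℕ → Y, W 0 = y ∧ ∀ k, W k ∈ f (v k) →
          (W (k+1) ∈ f (v (k+1)) ∧ ∃ h' ∈ H, ∃ e ∈ D,
            W k = W (k+1) + (γ * d k) • h' + e) :=
        ⟨fun k => Nat.rec y (fun k z => gd k z) k, rfl, fun k => hgd k _⟩
      have hW : ∀ k, W k ∈ f (v k) := by
        intro k
        induction k with
        | zero => rw [hW0]; exact hy
        | succ k ih => exact (hWs k ih).1
      have hWdec : ∀ k, ∃ h' ∈ H, ∃ e ∈ D, W k = W (k+1) + (γ * d k) • h' + e :=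
        fun k => (hWs k (hW k)).2
      choose hh hhH ee heeD heq using hWdec
      -- partial sums identity
      have hps : ∀ N, ∃ E ∈ D, y = W N + (∑ k ∈ Finset.range N, (γ * d k) • hh k) + E := by
        intro N
        induction N with
        | zero => exact ⟨0, h0D, by simp [hW0]⟩
        | succ N ih =>
          obtain ⟨E, hE, hEq⟩ := ih
          refine ⟨ee N + E, addD _ (heeD N) _ hE, ?_⟩
          rw [hEq, heq N, Finset.sum_range_succ]
          abel
      -- apply σ-convexity
      have hlam : Tendsto (fun N => ∑ k ∈ Finset.range N, d k / σ) atTop (nhds 1) := by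
        have := hdsum.div_const σ
        rw [div_self hσpos.ne'] at this
        refine this.congr fun N => ?_
        rw [Finset.sum_div]
      obtain ⟨hbar, hbarH, hbartend⟩ := hHσ hh (fun k => d k / σ) hhH
        (fun k => div_nonneg dist_nonneg hσpos.le) hlam
      have hsum2 : Tendsto (fun N => ∑ k ∈ Finset.range N, (γ * d k) • hh k) atTop
          (nhds ((γ * σ) • hbar)) := by
        have := hbartend.const_smul (γ * σ)
        refine this.congr fun N => ?_
        rw [Finset.smul_sum]
        refine Finset.sum_congr rfl fun k _ => ?_
        rw [smul_smul]
        congr 1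
        field_simp
      -- pass to the limit
      have hmemN : ∀ N, y - ∑ k ∈ Finset.range N, (γ * d k) • hh k ∈ f xh + D := by
        intro N
        obtain ⟨E, hE, hEq⟩ := hps N
        obtain ⟨w, hw, e', he', heq'⟩ := hlim (n + N) (hW N)
        have heq'' : w + e' = W N := heq'
        refine ⟨w, hw, e' + E, addD _ he' _ hE, ?_⟩
        rw [hEq, ← heq'']
        exact aux1 _ _ _ _
      have hlimmem : y - (γ * σ) • hbar ∈ f xh + D := by
        refine (hclv xh).mem_of_tendsto (tendsto_const_nhds.sub hsum2)
          (Eventually.of_forall hmemN)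
      obtain ⟨w, hw, e', he', heq'⟩ := hlimmem
      have heq'' : w + e' = y - (γ * σ) • hbar := heq'
      set δ : ℝ := dist xh (u n) with hδdef
      refine mem3_iff.mpr ⟨w, hw, hbar, hbarH,
        e' + (γ * (σ - δ)) • hbar,
        addD _ he' _ (coneD _ (by nlinarith) hbar (hHDsub hbar hbarH)), ?_⟩
      have hsplit : (γ * σ) • hbar = (γ * δ) • hbar + (γ * (σ - δ)) • hbar := by
        rw [← add_smul]; ring_nf
      have hy2 : y = (w + e') + (γ * σ) • hbar := by
        rw [heq'']; exact aux3 _ _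
      rw [hy2, hsplit]; exact aux2 _ _ _ _
  -- conclusion
  refine ⟨xh, ?_, ?_⟩
  · have := hkey 0
    rw [hu0] at this
    exact (Sdef x₀ xh).mp this
  · intro x hxne hcon
    have hxS : x ∈ S xh := (Sdef xh x).mpr hcon
    have hxh0 : xh ∈ S x₀ := by have := hkey 0; rwa [hu0] at this
    have hxn : ∀ n, x ∈ S (u n) := fun n => htrans (u n) xh x (hkey n) hxS
    have hx0 : x ∈ S x₀ := by have := hxn 0; rwa [hu0] at this
    have hbound : ∀ n, K * dist x xh ≤ (1/2:ℝ)^n := by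
      intro n
      have h1 : sInf (φ '' S (u n)) ≤ φ x := by
        refine csInf_le ⟨c, ?_⟩ (Set.mem_image_of_mem _ (hxn n))
        rintro r ⟨x', hx', rfl⟩
        exact hφlb x' (htrans x₀ (u n) x' (huS0 n) hx')
      have h2 : φ (u (n+1)) ≤ φ x + (1/2:ℝ)^n := le_trans (huφ n) (by linarith)
      have h3 : φ xh + K * dist xh (u (n+1)) ≤ φ (u (n+1)) :=
        hscal (u (n+1)) xh (hkey (n+1)) hxh0
      have h4 : φ x + K * dist x xh ≤ φ xh := hscal xh x hxS hx0
      have h5 : (0:ℝ) ≤ K * dist xh (u (n+1)) := by positivity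
      linarith
    have hlim0 : Tendsto (fun n : ℕ => (1/2:ℝ)^n) atTop (nhds 0) := by
      apply tendsto_pow_atTop_nhds_zero_of_lt_one <;> norm_num
    have : K * dist x xh ≤ 0 := ge_of_tendsto' hlim0 fun n => hbound n
    have hd0 : dist x xh ≤ 0 := by nlinarith
    exact hxne (by rwa [← dist_le_zero])
end

section
/- Let (X,d) be a complete metric space, x₀ ∈ X, Y a locally convex space, D a convex cone, H ⊆ D \ {0} a bounded convex set with 0 ∉ cl(H+D), and f : X → nonempty subsets of Y which is D-sequentially lower monotone and has (H,D)-closed values (f(x) + λH + D is closed for all x ∈ X, λ ≥ 0). Suppose there exists ξ ∈ Y* with inf ξ(H) > 0, ξ ≥ 0 on D, and ξ lower bounded on f(S(x₀)). Then for any γ > 0 there exists x̂ ∈ X such that: (a) f(x₀) ⊆ f(x̂) + γd(x̂,x₀)H + D; (b) for every x ≠ x̂, f(x̂) ⊄ f(x) + γd(x,x̂)H + D. -/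
open Pointwise Filter Topology

/-- **Theorem 4.2′.** Set-valued EVP with a bounded convex perturbation set and
`(H,D)`-closed values. -/
theorem setvalued_EVP_bounded_H {X Y : Type*} [MetricSpace X] [CompleteSpace X]
    [AddCommGroup Y] [Module ℝ Y] [TopologicalSpace Y] [IsTopologicalAddGroup Y]
    [ContinuousSMul ℝ Y] [LocallyConvexSpace ℝ Y]
    (D : Set Y) (hDadd : D + D ⊆ D) (hDsmul : ∀ α : ℝ, 0 ≤ α → α • D ⊆ D)
    (H : Set Y) (hHD : H ⊆ D \ {0}) (hHconv : Convex ℝ H)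
    (hHbdd : Bornology.IsVonNBounded ℝ H)
    (hB1 : (0 : Y) ∉ closure (H + D))
    (f : X → Set Y) (hf : ∀ x, (f x).Nonempty)
    (hslm : ∀ (xs : ℕ → X) (xbar : X), (∀ n, f (xs n) ⊆ f (xs (n + 1)) + D) →
      Tendsto xs atTop (nhds xbar) → ∀ n, f (xs n) ⊆ f xbar + D)
    (hclv : ∀ x : X, ∀ lam : ℝ, 0 ≤ lam → IsClosed (f x + lam • H + D))
    (x₀ : X) (γ : ℝ) (hγ : 0 < γ)
    (S : X → Set X)
    (hS : ∀ x, S x = {x' | f x ⊆ f x' + (γ * dist x' x) • H + D})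
    (ξ : Y →L[ℝ] ℝ) (hξH : 0 < sInf (ξ '' H)) (hξD : ∀ d ∈ D, 0 ≤ ξ d)
    (hbd : ∃ c : ℝ, ∀ y ∈ ⋃ x ∈ S x₀, f x, c ≤ ξ y) :
    ∃ xhat : X,
      (f x₀ ⊆ f xhat + (γ * dist xhat x₀) • H + D) ∧
      (∀ x : X, x ≠ xhat → ¬ f xhat ⊆ f x + (γ * dist x xhat) • H + D) := by
  classical
  -- unpack S
  have hSmem : ∀ x x' : X, x' ∈ S x ↔ f x ⊆ f x' + (γ * dist x' x) • H + D := by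
    intro x x'; rw [hS]; exact Iff.rfl
  -- H is nonempty
  have hHne : H.Nonempty := by
    by_contra h
    rw [Set.not_nonempty_iff_eq_empty] at h
    simp [h, Real.sInf_empty] at hξH
  obtain ⟨h₀, hh₀⟩ := hHne
  have hHsubD : H ⊆ D := fun h hh => (hHD hh).1
  have hD0 : (0 : Y) ∈ D := hDsmul 0 le_rfl ⟨h₀, hHsubD hh₀, zero_smul ℝ h₀⟩
  set α := sInf (ξ '' H) with hα_def
  have hαpos : 0 < α := hξH
  have hξlb : ∀ h ∈ H, α ≤ ξ h := by
    intro h hh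
    exact csInf_le ⟨0, by rintro _ ⟨h', hh', rfl⟩; exact hξD h' (hHsubD hh')⟩ ⟨h, hh, rfl⟩
  -- membership helper
  have hmem : ∀ (g : Set Y) (c : ℝ) (y : Y),
      y ∈ g + c • H + D ↔ ∃ u ∈ g, ∃ h ∈ H, ∃ e ∈ D, y = u + c • h + e := by
    intro g c y
    constructor
    · rintro ⟨_, ⟨u, hu, _, ⟨h, hh, rfl⟩, rfl⟩, e, he, rfl⟩
      exact ⟨u, hu, h, hh, e, he, rfl⟩
    · rintro ⟨u, hu, h, hh, e, he, rfl⟩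
      exact ⟨u + c • h, ⟨u, hu, c • h, ⟨h, hh, rfl⟩, rfl⟩, e, he, rfl⟩
  -- absorbing a larger coefficient
  have habsorb : ∀ c c' : ℝ, 0 ≤ c → c ≤ c' → ∀ h ∈ H, ∃ e ∈ D, c' • h = c • h + e := by
    intro c c' hc hcc h hh
    refine ⟨(c' - c) • h, hDsmul _ (by linarith) ⟨h, hHsubD hh, rfl⟩, ?_⟩
    rw [← add_smul]
    congr 1
    ring
  -- convex combination
  have hcomb : ∀ c₁ c₂ : ℝ, 0 ≤ c₁ → 0 ≤ c₂ → ∀ h₁ ∈ H, ∀ h₂ ∈ H,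
      ∃ h ∈ H, c₁ • h₁ + c₂ • h₂ = (c₁ + c₂) • h := by
    intro c₁ c₂ hc₁ hc₂ h₁ hh₁ h₂ hh₂
    rcases eq_or_lt_of_le (add_nonneg hc₁ hc₂) with hsum | hsum
    · have hc1 : c₁ = 0 := by linarith
      have hc2 : c₂ = 0 := by linarith
      exact ⟨h₀, hh₀, by simp [hc1, hc2]⟩
    · have hs : c₁ + c₂ ≠ 0 := ne_of_gt hsum
      refine ⟨(c₁ / (c₁ + c₂)) • h₁ + (c₂ / (c₁ + c₂)) • h₂,
        hHconv hh₁ hh₂ (by positivity) (by positivity) (by field_simp), ?_⟩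
      rw [smul_add, smul_smul, smul_smul]
      congr 1 <;> congr 1 <;> field_simp
  -- transitivity of S
  have htrans : ∀ x x' : X, x' ∈ S x → S x' ⊆ S x := by
    intro x x' hx' x'' hx''
    rw [hSmem] at hx' hx'' ⊢
    intro y hy
    obtain ⟨u, hu, h₁, hh₁, e₁, he₁, rfl⟩ := (hmem _ _ _).1 (hx' hy)
    obtain ⟨v, hv, h₂, hh₂, e₂, he₂, rfl⟩ := (hmem _ _ _).1 (hx'' hu)
    have hd1 : (0:ℝ) ≤ γ * dist x'' x' := mul_nonneg hγ.le dist_nonneg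
    have hd2 : (0:ℝ) ≤ γ * dist x' x := mul_nonneg hγ.le dist_nonneg
    obtain ⟨h, hh, heq⟩ := hcomb (γ * dist x'' x') (γ * dist x' x) hd1 hd2 h₂ hh₂ h₁ hh₁
    have hle : γ * dist x'' x ≤ γ * dist x'' x' + γ * dist x' x := by
      have := dist_triangle x'' x' x
      nlinarith
    obtain ⟨e, he, heq2⟩ := habsorb (γ * dist x'' x) (γ * dist x'' x' + γ * dist x' x)
      (mul_nonneg hγ.le dist_nonneg) hle h hh
    refine (hmem _ _ _).2 ⟨v, hv, h, hh, e + (e₂ + e₁),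
      hDadd ⟨e, he, e₂ + e₁, hDadd ⟨e₂, he₂, e₁, he₁, rfl⟩, rfl⟩, ?_⟩
    rw [show v + (γ * dist x'' x') • h₂ + e₂ + (γ * dist x' x) • h₁ + e₁
        = v + ((γ * dist x'' x') • h₂ + (γ * dist x' x) • h₁) + (e₂ + e₁) from by abel,
      heq, heq2]
    abel
  -- reflexivity of S
  have hSrefl : ∀ x, x ∈ S x := by
    intro x
    rw [hSmem]
    intro y hy
    refine (hmem _ _ _).2 ⟨y, hy, h₀, hh₀, 0, hD0, ?_⟩
    simp
  -- the scalarizing function m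
  obtain ⟨c, hc⟩ := hbd
  set m : X → ℝ := fun x => sInf (ξ '' f x) with hm_def
  have hbdd : ∀ x ∈ S x₀, BddBelow (ξ '' f x) := by
    intro x hx
    exact ⟨c, by rintro _ ⟨y, hy, rfl⟩; exact hc y (Set.mem_biUnion hx hy)⟩
  have hmlb : ∀ x ∈ S x₀, c ≤ m x := by
    intro x hx
    exact le_csInf ((hf x).image ξ) (by rintro _ ⟨y, hy, rfl⟩; exact hc y (Set.mem_biUnion hx hy))
  -- key inequality
  have hkey : ∀ x' x : X, x ∈ S x₀ → x ∈ S x' → m x + γ * dist x x' * α ≤ m x' := by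
    intro x' x hx0 hx
    rw [hSmem] at hx
    refine le_csInf ((hf x').image ξ) ?_
    rintro _ ⟨y, hy, rfl⟩
    obtain ⟨u, hu, h, hh, e, he, rfl⟩ := (hmem _ _ _).1 (hx hy)
    have h1 : m x ≤ ξ u := csInf_le (hbdd x hx0) ⟨u, hu, rfl⟩
    have h2 : γ * dist x x' * α ≤ γ * dist x x' * ξ h :=
      mul_le_mul_of_nonneg_left (hξlb h hh) (mul_nonneg hγ.le dist_nonneg)
    have h3 : 0 ≤ ξ e := hξD e he
    have h4 : ξ (u + (γ * dist x x') • h + e) = ξ u + (γ * dist x x') * ξ h + ξ e := by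
      simp [map_add, map_smul, smul_eq_mul]
    rw [h4]
    linarith
  -- selection step
  have hnext : ∀ (n : ℕ) (x : X), x ∈ S x₀ →
      ∃ x', x' ∈ S x ∧ x' ∈ S x₀ ∧ ∀ z ∈ S x', m x' ≤ m z + (1/2 : ℝ)^n := by
    intro n x hx
    have hSsub : S x ⊆ S x₀ := htrans x₀ x hx
    have hne : (m '' S x).Nonempty := ⟨m x, x, hSrefl x, rfl⟩
    have hbddS : BddBelow (m '' S x) :=
      ⟨c, by rintro _ ⟨z, hz, rfl⟩; exact hmlb z (hSsub hz)⟩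
    obtain ⟨_, ⟨x', hx', rfl⟩, hlt⟩ := exists_lt_of_csInf_lt hne
      (lt_add_of_pos_right _ (by positivity : (0:ℝ) < (1/2 : ℝ)^n))
    refine ⟨x', hx', hSsub hx', ?_⟩
    intro z hz
    have hz' : sInf (m '' S x) ≤ m z := csInf_le hbddS ⟨z, htrans x x' hx' hz, rfl⟩
    linarith
  -- the iterative sequence
  let nxt : ℕ → X → X := fun n x => if hx : x ∈ S x₀ then (hnext n x hx).choose else x
  let seq : ℕ → X := fun n => Nat.rec x₀ nxt n
  have hmemS0 : ∀ n, seq n ∈ S x₀ := by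
    intro n
    induction n with
    | zero => exact hSrefl x₀
    | succ n ih =>
      have heq : seq (n+1) = (hnext n (seq n) ih).choose := by
        show nxt n (seq n) = _
        simp only [nxt]
        rw [dif_pos ih]
      rw [heq]
      exact (hnext n (seq n) ih).choose_spec.2.1
  have hstep : ∀ n, seq (n+1) ∈ S (seq n) ∧
      ∀ z ∈ S (seq (n+1)), m (seq (n+1)) ≤ m z + (1/2 : ℝ)^n := by
    intro n
    have hx := hmemS0 n
    have heq : seq (n+1) = (hnext n (seq n) hx).choose := by
      show nxt n (seq n) = _
      simp only [nxt]
      rw [dif_pos hx]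
    rw [heq]
    obtain ⟨h1, _, h3⟩ := (hnext n (seq n) hx).choose_spec
    exact ⟨h1, h3⟩
  -- chain of memberships
  have hchain : ∀ q p, q ≤ p → seq p ∈ S (seq q) := by
    intro q p
    induction p with
    | zero =>
      intro h
      have hq : q = 0 := Nat.le_zero.1 h
      subst hq
      exact hSrefl _
    | succ p ih =>
      intro h
      rcases eq_or_lt_of_le h with h' | h'
      · subst h'
        exact hSrefl _
      · exact htrans _ _ (ih (Nat.lt_succ_iff.1 h')) (hstep p).1
  -- distance estimate
  have hβ : ∀ n, ∀ z ∈ S (seq (n+1)), γ * dist z (seq (n+1)) * α ≤ (1/2 : ℝ)^n := by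
    intro n z hz
    have h1 := (hstep n).2 z hz
    have hz0 : z ∈ S x₀ := htrans _ _ (hmemS0 (n+1)) hz
    have h2 := hkey (seq (n+1)) z hz0 hz
    linarith
  -- Cauchy
  have hcauchy : CauchySeq seq := by
    rw [Metric.cauchySeq_iff']
    intro ε hε
    obtain ⟨N, hN⟩ : ∃ N : ℕ, (1/2 : ℝ)^N < ε * (γ * α) :=
      exists_pow_lt_of_lt_one (by positivity) (by norm_num)
    refine ⟨N + 1, fun n hn => ?_⟩
    have hm' : seq n ∈ S (seq (N+1)) := hchain _ _ hn
    have h1 := hβ N _ hm'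
    nlinarith [dist_nonneg (x := seq n) (y := seq (N+1)), mul_pos hγ hαpos]
  obtain ⟨xhat, hxhat⟩ := cauchySeq_tendsto_of_complete hcauchy
  -- monotone chain for slm
  have hmono : ∀ n, f (seq n) ⊆ f (seq (n+1)) + D := by
    intro n y hy
    have h1 := (hSmem _ _).1 (hstep n).1 hy
    obtain ⟨u, hu, h, hh, e, he, rfl⟩ := (hmem _ _ _).1 h1
    have hD' : (γ * dist (seq (n+1)) (seq n)) • h + e ∈ D :=
      hDadd ⟨_, hDsmul _ (mul_nonneg hγ.le dist_nonneg) ⟨h, hHsubD hh, rfl⟩, e, he, rfl⟩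
    rw [add_assoc]
    exact Set.add_mem_add hu hD'
  have hslm' : ∀ n, f (seq n) ⊆ f xhat + D := hslm seq xhat hmono hxhat
  -- xhat belongs to all S (seq n)
  have hxhatS : ∀ n, xhat ∈ S (seq n) := by
    intro n
    rw [hSmem]
    intro y hy
    set lam := γ * dist xhat (seq n) with hlam
    have hlam0 : 0 ≤ lam := mul_nonneg hγ.le dist_nonneg
    have hclosed : IsClosed (f xhat + lam • H + D) := hclv xhat lam hlam0
    rw [← hclosed.closure_eq]
    have Hm : ∀ p, n ≤ p →
        ∃ h ∈ H, y + (max (lam - γ * dist (seq p) (seq n)) 0) • h ∈ f xhat + lam • H + D := by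
      intro p hp
      have h1 := (hSmem _ _).1 (hchain n p hp) hy
      obtain ⟨u, hu, h, hh, e, he, rfl⟩ := (hmem _ _ _).1 h1
      obtain ⟨w, hw, e', he', rfl⟩ := hslm' p hu
      set μ := γ * dist (seq p) (seq n) with hμ
      have hμ0 : 0 ≤ μ := mul_nonneg hγ.le dist_nonneg
      refine ⟨h, hh, ?_⟩
      rcases le_or_gt lam μ with hcase | hcase
      · rw [max_eq_right (by linarith)]
        obtain ⟨e₂, he₂, heq⟩ := habsorb lam μ hlam0 hcase h hh
        refine (hmem _ _ _).2 ⟨w, hw, h, hh, e₂ + (e' + e),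
          hDadd ⟨e₂, he₂, e' + e, hDadd ⟨e', he', e, he, rfl⟩, rfl⟩, ?_⟩
        rw [zero_smul, add_zero,
          show w + e' + μ • h + e = w + μ • h + (e' + e) from by abel, heq]
        abel
      · rw [max_eq_left (by linarith)]
        have heq : μ • h + (lam - μ) • h = lam • h := by
          rw [← add_smul]
          congr 1
          ring
        refine (hmem _ _ _).2 ⟨w, hw, h, hh, e' + e,
          hDadd ⟨e', he', e, he, rfl⟩, ?_⟩
        rw [show w + e' + μ • h + e + (lam - μ) • h
            = w + (μ • h + (lam - μ) • h) + (e' + e) from by abel, heq]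
    let sel : ℕ → Y := fun p => if hp : n ≤ p then (Hm p hp).choose else h₀
    have hselH : ∀ p, sel p ∈ H := by
      intro p
      by_cases hp : n ≤ p
      · simp only [sel, dif_pos hp]
        exact (Hm p hp).choose_spec.1
      · simp only [sel, dif_neg hp]
        exact hh₀
    have hselT : ∀ p, n ≤ p →
        y + (max (lam - γ * dist (seq p) (seq n)) 0) • sel p ∈ f xhat + lam • H + D := by
      intro p hp
      simp only [sel, dif_pos hp]
      exact (Hm p hp).choose_spec.2
    have hctend : Tendsto (fun p => max (lam - γ * dist (seq p) (seq n)) 0) atTop (𝓝 0) := by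
      have h1 : Tendsto (fun p => lam - γ * dist (seq p) (seq n)) atTop (𝓝 0) := by
        have h2 := (tendsto_const_nhds (x := lam) (f := atTop (α := ℕ))).sub
          ((tendsto_const_nhds (x := γ) (f := atTop (α := ℕ))).mul
            (hxhat.dist (tendsto_const_nhds (x := seq n))))
        simpa [hlam] using h2
      have h3 := h1.max (tendsto_const_nhds (x := (0:ℝ)))
      simpa using h3
    have hz : Tendsto (fun p => y + (max (lam - γ * dist (seq p) (seq n)) 0) • sel p)
        atTop (𝓝 y) := by
      have h0 : Tendsto (fun p => (max (lam - γ * dist (seq p) (seq n)) 0) • sel p)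
          atTop (𝓝 0) := by
        have := hHbdd.smul_tendsto_zero (Filter.Eventually.of_forall hselH) hctend
        exact this
      simpa using (tendsto_const_nhds (x := y)).add h0
    exact mem_closure_of_tendsto hz (Filter.eventually_atTop.2 ⟨n, hselT⟩)
  -- conclusion
  refine ⟨xhat, (hSmem x₀ xhat).1 (hxhatS 0), ?_⟩
  intro x hxne hxS
  apply hxne
  have hxS' : x ∈ S xhat := (hSmem xhat x).2 hxS
  have hd : ∀ n, γ * dist x (seq (n+1)) * α ≤ (1/2 : ℝ)^n := by
    intro n
    exact hβ n x (htrans _ xhat (hxhatS (n+1)) hxS')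
  have h1 : Tendsto (fun n => dist x (seq (n+1))) atTop (𝓝 (dist x xhat)) :=
    (tendsto_const_nhds (x := x)).dist (hxhat.comp (tendsto_add_atTop_nat 1))
  have h2 : Tendsto (fun n => dist x (seq (n+1))) atTop (𝓝 0) := by
    refine squeeze_zero (fun n => dist_nonneg) (fun n => ?_)
      ?_ (g := fun n => (1/2 : ℝ)^n / (γ * α))
    · rw [le_div_iff₀ (mul_pos hγ hαpos)]
      nlinarith [hd n]
    · have h3 := (tendsto_pow_atTop_nhds_zero_of_lt_one (by norm_num : (0:ℝ) ≤ 1/2)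
        (by norm_num : (1/2:ℝ) < 1)).div_const (γ * α)
      simpa using h3
  have h4 : dist x xhat = 0 := tendsto_nhds_unique h1 h2
  exact eq_of_dist_eq_zero h4
end

section
/- Let (X,d) be a metric space, Y a locally convex space, D ⊆ Y a convex cone, H ⊆ D \ {0} convex, and f : X → nonempty subsets of Y. Let p : X × X → [0,∞) satisfy: (p₁) p(x₁,x₃) ≤ p(x₁,x₂) + p(x₂,x₃); (p₂) every sequence (xₙ) with p(xₙ,x_m) → 0 (m > n → ∞) is Cauchy; (p₃) p(x,x′) > 0 whenever x ≠ x′. Let x₀ ∈ X with S(x₀) := {x : f(x₀) ⊆ f(x) + p(x₀,x)H + D} nonempty, (X,d) S(x₀)-dynamically complete, and S(x) dynamically closed for every x ∈ S(x₀). Assume 0 ∉ cl(H+D) and there exists ξ ∈ Y* with inf ξ(H) > 0, ξ ≥ 0 on D, ξ lower bounded on f(S(x₀)). Then there exists x̂ ∈ X such that: (a) f(x₀) ⊆ f(x̂) + p(x₀,x̂)H + D; (b) for all x ≠ x̂, f(x̂) ⊄ f(x) + p(x̂,x)H + D. -/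
open Pointwise Filter Topology

/-- **Theorem 4.4.** Set-valued EVP with perturbation `p(·,·)H` for a generalized
distance `p`. -/
theorem setvalued_EVP_p_distance {X Y : Type*} [MetricSpace X]
    [AddCommGroup Y] [Module ℝ Y] [TopologicalSpace Y] [IsTopologicalAddGroup Y]
    [ContinuousSMul ℝ Y] [LocallyConvexSpace ℝ Y]
    (D : Set Y) (hDadd : D + D ⊆ D) (hDsmul : ∀ α : ℝ, 0 ≤ α → α • D ⊆ D)
    (H : Set Y) (hHD : H ⊆ D \ {0}) (hHconv : Convex ℝ H)
    (f : X → Set Y) (hf : ∀ x, (f x).Nonempty)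
    (p : X → X → ℝ) (hp0 : ∀ x x', 0 ≤ p x x')
    (hp1 : ∀ x₁ x₂ x₃ : X, p x₁ x₃ ≤ p x₁ x₂ + p x₂ x₃)
    (hp2 : ∀ xs : ℕ → X,
      (∀ ε : ℝ, 0 < ε → ∃ n₀ : ℕ, ∀ m n : ℕ, n₀ ≤ n → n < m → p (xs n) (xs m) < ε) →
      CauchySeq xs)
    (hp3 : ∀ x x' : X, x ≠ x' → 0 < p x x')
    (S : X → Set X)
    (hS : ∀ x, S x = {x' | f x ⊆ f x' + p x x' • H + D})
    (x₀ : X) (hS0 : (S x₀).Nonempty)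
    (hcomplete : ∀ xs : ℕ → X, (∀ n, xs n ∈ S x₀) →
      (∀ n, S (xs (n + 1)) ⊆ S (xs n)) → (∀ n, S (xs n) ⊆ S x₀) →
      CauchySeq xs → ∃ u : X, Tendsto xs atTop (nhds u))
    (hdyn : ∀ x ∈ S x₀, ∀ xs : ℕ → X, (∀ n, xs n ∈ S x) →
      (∀ n, S (xs (n + 1)) ⊆ S (xs n)) → (∀ n, S (xs n) ⊆ S x) →
      ∀ xbar : X, Tendsto xs atTop (nhds xbar) → xbar ∈ S x)
    (hB1 : (0 : Y) ∉ closure (H + D))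
    (ξ : Y →L[ℝ] ℝ) (hξH : 0 < sInf (ξ '' H)) (hξD : ∀ d ∈ D, 0 ≤ ξ d)
    (hbd : ∃ c : ℝ, ∀ y ∈ ⋃ x ∈ S x₀, f x, c ≤ ξ y) :
    ∃ xhat : X,
      (f x₀ ⊆ f xhat + p x₀ xhat • H + D) ∧
      (∀ x : X, x ≠ xhat → ¬ f xhat ⊆ f x + p xhat x • H + D) := by
  classical
  by_contra hcon
  push_neg at hcon
  -- membership characterization
  have memS : ∀ x x' : X, x' ∈ S x ↔ f x ⊆ f x' + p x x' • H + D := by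
    intro x x'; rw [hS]; exact Iff.rfl
  have hne : ∀ x ∈ S x₀, ∃ x', x' ≠ x ∧ x' ∈ S x := by
    intro x hx
    obtain ⟨x', h1, h2⟩ := hcon x ((memS _ _).1 hx)
    exact ⟨x', h1, (memS _ _).2 h2⟩
  -- H nonempty
  have hHne : H.Nonempty := by
    by_contra h
    rw [Set.not_nonempty_iff_eq_empty] at h
    rw [h] at hξH
    simp [Real.sInf_empty] at hξH
  have hbddH : BddBelow (ξ '' H) := by
    by_contra h
    rw [Real.sInf_of_not_bddBelow h] at hξH
    exact lt_irrefl 0 hξH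
  set α := sInf (ξ '' H) with hαdef
  have hαle : ∀ h ∈ H, α ≤ ξ h := fun h hh => csInf_le hbddH ⟨h, hh, rfl⟩
  have hsmulHD : ∀ r : ℝ, 0 ≤ r → r • H ⊆ D := fun r hr =>
    (Set.smul_set_mono (fun y hy => (hHD hy).1)).trans (hDsmul r hr)
  have hshrink : ∀ a b : ℝ, 0 ≤ b → b ≤ a → a • H + D ⊆ b • H + D := by
    intro a b hb hba
    have h1 : a • H = b • H + (a - b) • H := by
      rw [← hHconv.add_smul hb (by linarith : (0:ℝ) ≤ a - b)]
      norm_num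
    calc a • H + D = b • H + ((a - b) • H + D) := by rw [h1, add_assoc]
      _ ⊆ b • H + (D + D) :=
        Set.add_subset_add_left (Set.add_subset_add_right (hsmulHD _ (by linarith)))
      _ ⊆ b • H + D := Set.add_subset_add_left hDadd
  have T : ∀ x x' : X, x' ∈ S x → S x' ⊆ S x := by
    intro x x' h1 x'' h2
    rw [memS] at h1 h2 ⊢
    have e1 : f x ⊆ f x'' + p x' x'' • H + D + p x x' • H + D :=
      h1.trans (Set.add_subset_add_right (Set.add_subset_add_right h2))
    have e2 : f x'' + p x' x'' • H + D + p x x' • H + D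
        = f x'' + ((p x x' + p x' x'') • H + (D + D)) := by
      rw [hHconv.add_smul (hp0 x x') (hp0 x' x'')]
      abel
    have e3 : (p x x' + p x' x'') • H + (D + D) ⊆ p x x'' • H + D :=
      (Set.add_subset_add Set.Subset.rfl hDadd).trans
        (hshrink _ _ (hp0 x x'') (hp1 x x' x''))
    calc f x ⊆ _ := e1
      _ = _ := e2
      _ ⊆ f x'' + (p x x'' • H + D) := Set.add_subset_add_left e3
      _ = f x'' + p x x'' • H + D := (add_assoc _ _ _).symm
  -- scalarization
  set φ : X → ℝ := fun x => sInf (ξ '' f x) with hφdef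
  obtain ⟨c, hc⟩ := hbd
  have hlbξ : ∀ x ∈ S x₀, ∀ y ∈ f x, c ≤ ξ y := fun x hx y hy =>
    hc y (Set.mem_iUnion₂.2 ⟨x, hx, hy⟩)
  have hbddf : ∀ x ∈ S x₀, BddBelow (ξ '' f x) := by
    intro x hx
    refine ⟨c, ?_⟩
    rintro b ⟨y, hy, rfl⟩
    exact hlbξ x hx y hy
  have hφc : ∀ x ∈ S x₀, c ≤ φ x := by
    intro x hx
    apply le_csInf ((hf x).image ξ)
    rintro b ⟨y, hy, rfl⟩
    exact hlbξ x hx y hy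
  have M : ∀ x x' : X, x' ∈ S x → BddBelow (ξ '' f x') →
      φ x' + α * p x x' ≤ φ x := by
    intro x x' hx' hbdd
    apply le_csInf ((hf x).image ξ)
    rintro b ⟨y, hy, rfl⟩
    rw [memS] at hx'
    have hy' := hx' hy
    rw [Set.mem_add] at hy'
    obtain ⟨z, hz, d, hd, rfl⟩ := hy'
    rw [Set.mem_add] at hz
    obtain ⟨w, hw, h, hh, rfl⟩ := hz
    obtain ⟨h₀, hh₀, rfl⟩ := hh
    have hw' : φ x' ≤ ξ w := csInf_le hbdd ⟨w, hw, rfl⟩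
    have hh' : α ≤ ξ h₀ := hαle h₀ hh₀
    have hd' : 0 ≤ ξ d := hξD d hd
    have hmul : α * p x x' ≤ p x x' * ξ h₀ := by
      rw [mul_comm]
      exact mul_le_mul_of_nonneg_left hh' (hp0 x x')
    have : ξ (w + p x x' • h₀ + d) = ξ w + p x x' * ξ h₀ + ξ d := by
      simp [map_add, map_smul]
    rw [this]
    linarith
  -- the iterative construction
  obtain ⟨x₁, hx₁⟩ := hS0
  have hstep : ∀ (n : ℕ), ∀ x ∈ S x₀,
      ∃ x', x' ∈ S x ∧ x' ∈ S x₀ ∧ φ x' < sInf (φ '' S x) + (1/2)^n := by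
    intro n x hx
    obtain ⟨x', _hne', hx'⟩ := hne x hx
    obtain ⟨a, ⟨z, hzS, rfl⟩, hlt⟩ :=
      Real.lt_sInf_add_pos (Set.Nonempty.image φ ⟨x', hx'⟩)
        (by positivity : (0:ℝ) < (1/2)^n)
    exact ⟨z, hzS, T x₀ x hx hzS, hlt⟩
  let F : ℕ → {x : X // x ∈ S x₀} → {x : X // x ∈ S x₀} := fun n x =>
    ⟨(hstep n x.1 x.2).choose, (hstep n x.1 x.2).choose_spec.2.1⟩
  let xs' : ℕ → {x : X // x ∈ S x₀} := fun n =>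
    Nat.rec ⟨x₁, hx₁⟩ F n
  let xs : ℕ → X := fun n => (xs' n).1
  have hxsS0 : ∀ n, xs n ∈ S x₀ := fun n => (xs' n).2
  have hsuccA : ∀ n, xs (n+1) ∈ S (xs n) :=
    fun n => (hstep n (xs' n).1 (xs' n).2).choose_spec.1
  have hsuccB : ∀ n, φ (xs (n+1)) < sInf (φ '' S (xs n)) + (1/2)^n :=
    fun n => (hstep n (xs' n).1 (xs' n).2).choose_spec.2.2
  have hchain : ∀ n m, n < m → xs m ∈ S (xs n) := by
    intro n m h
    induction m with
    | zero => omega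
    | succ m ih =>
      rcases Nat.lt_succ_iff_lt_or_eq.1 h with h' | rfl
      · exact T (xs n) (xs m) (ih h') (hsuccA m)
      · exact hsuccA n
  have hmono : ∀ n, φ (xs (n+1)) ≤ φ (xs n) := by
    intro n
    have := M (xs n) (xs (n+1)) (hsuccA n) (hbddf _ (hxsS0 (n+1)))
    nlinarith [mul_nonneg hξH.le (hp0 (xs n) (xs (n+1)))]
  have hanti : Antitone (fun n => φ (xs n)) := antitone_nat_of_succ_le hmono
  have hbddrange : BddBelow (Set.range fun n => φ (xs n)) := by
    refine ⟨c, ?_⟩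
    rintro b ⟨n, rfl⟩
    exact hφc _ (hxsS0 n)
  set L := ⨅ n, φ (xs n) with hLdef
  have htend : Tendsto (fun n => φ (xs n)) atTop (𝓝 L) :=
    tendsto_atTop_ciInf hanti hbddrange
  have hLle : ∀ n, L ≤ φ (xs n) := fun n => ciInf_le hbddrange n
  have hCauchy : CauchySeq xs := by
    apply hp2
    intro ε hε
    have hαε : 0 < α * ε := mul_pos hξH hε
    obtain ⟨n₀, hn₀⟩ := Filter.eventually_atTop.1
      (htend.eventually (gt_mem_nhds (show L < L + α * ε by linarith)))
    refine ⟨n₀, fun m n hn hnm => ?_⟩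
    have h1 := M (xs n) (xs m) (hchain n m hnm) (hbddf _ (hxsS0 m))
    have h2 := hLle m
    have h3 := hn₀ n hn
    have : α * p (xs n) (xs m) < α * ε := by linarith
    exact lt_of_mul_lt_mul_left (by linarith) hξH.le
  obtain ⟨u, hu⟩ := hcomplete xs hxsS0 (fun n => T _ _ (hsuccA n))
    (fun n => T _ _ (hxsS0 n)) hCauchy
  have huS : ∀ n, u ∈ S (xs n) := by
    intro n
    refine hdyn (xs n) (hxsS0 n) (fun k => xs (k + (n+1)))
      (fun k => hchain n (k + (n+1)) (by omega))
      (fun k => ?_)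
      (fun k => T _ _ (hchain n (k + (n+1)) (by omega)))
      u (hu.comp (tendsto_add_atTop_nat (n+1)))
    have e : k + 1 + (n + 1) = (k + (n + 1)) + 1 := by omega
    have := T _ _ (hsuccA (k + (n+1)))
    rwa [← e] at this
  have huS0 : u ∈ S x₀ := T x₀ (xs 0) (hxsS0 0) (huS 0)
  obtain ⟨v, hvne, hvS⟩ := hne u huS0
  have hvSn : ∀ n, v ∈ S (xs n) := fun n => T _ _ (huS n) hvS
  have hvS0 : v ∈ S x₀ := T x₀ u huS0 hvS
  have hφuv : φ u ≤ φ v := by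
    apply le_of_forall_pos_le_add
    intro ε hε
    obtain ⟨n, hn⟩ := exists_pow_lt_of_lt_one hε (by norm_num : (1/2:ℝ) < 1)
    have h1 := M (xs (n+1)) u (huS (n+1)) (hbddf u huS0)
    have h2 := hsuccB n
    have h3 : sInf (φ '' S (xs n)) ≤ φ v := by
      apply csInf_le
      · refine ⟨c, ?_⟩
        rintro b ⟨z, hz, rfl⟩
        exact hφc z (T x₀ (xs n) (hxsS0 n) hz)
      · exact ⟨v, hvSn n, rfl⟩
    nlinarith [mul_nonneg hξH.le (hp0 (xs (n+1)) u)]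
  have hfinal := M u v hvS (hbddf v hvS0)
  have hpuv : 0 < p u v := hp3 u v (Ne.symm hvne)
  nlinarith [mul_pos hξH hpuv]
end

section
/- Let (X,d) be a metric space, Y a locally convex space, D ⊆ Y a convex cone, k₀ ∈ D \ (−vcl(D)) with D k₀-closed. Let f : X → nonempty subsets of Y be strongly D-sequentially lower monotone (D-lsca), with f(x) having the strict domination property for all x, and let (X,d) be strongly (f,D)-lower complete. Suppose (x₀,y₀) ∈ gr f and ε > 0 with y₀ ∉ f(X) + εk₀ + D. Then for any λ > 0 there exists (x̂,ŷ) ∈ gr f such that: (a) y₀ ∈ ŷ + (ε/λ)d(x̂,x₀)k₀ + D and ŷ ∈ SMin^D f(x̂); (b) for any (x,y) ∈ gr f \ {(x̂,ŷ)}, ŷ ∉ y + (ε/λ)d(x,x̂)k₀ + D; (c) d(x₀,x̂) ≤ λ. -/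
open Pointwise Filter Topology

/-- `ybar` is a strict Pareto minimum of `B` with respect to the cone `D`. -/
def StrictParetoMin {Y : Type*} [AddCommGroup Y] (D : Set Y) (B : Set Y) (ybar : Y) : Prop :=
  ybar ∈ B ∧ ∀ y ∈ B, y ≠ ybar → ybar - y ∉ D

/-- `B` has the strict domination property with respect to `D`. -/
def StrictDomination {Y : Type*} [AddCommGroup Y] (D : Set Y) (B : Set Y) : Prop :=
  ∀ y ∈ B, ∃ ybar : Y, StrictParetoMin D B ybar ∧ y - ybar ∈ D

section Aux

variable {X Y : Type*} [MetricSpace X] [AddCommGroup Y] [Module ℝ Y]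

/-- The Ekeland-type preorder: `LeR D k₀ γ f p q` means `p` is "below" `q`,
i.e. `p ∈ gr f` and `q.2 - p.2 - γ d(p.1, q.1) k₀ ∈ D`. -/
def LeR (D : Set Y) (k₀ : Y) (γ : ℝ) (f : X → Set Y) (p q : X × Y) : Prop :=
  p.2 ∈ f p.1 ∧ q.2 - p.2 - (γ * dist p.1 q.1) • k₀ ∈ D

lemma LeR_refl {D : Set Y} {k₀ : Y} {γ : ℝ} {f : X → Set Y} (hD0 : (0:Y) ∈ D)
    {q : X × Y} (hq : q.2 ∈ f q.1) : LeR D k₀ γ f q q := by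
  refine ⟨hq, ?_⟩
  simp only [dist_self, mul_zero, zero_smul, sub_self, sub_zero]
  exact hD0

lemma LeR_trans {D : Set Y} {k₀ : Y} {γ : ℝ} {f : X → Set Y}
    (hDadd : D + D ⊆ D) (hDsmul : ∀ α : ℝ, 0 ≤ α → α • D ⊆ D)
    (hk₀ : k₀ ∈ D) (hγ : 0 ≤ γ) {a b c : X × Y}
    (hab : LeR D k₀ γ f a b) (hbc : LeR D k₀ γ f b c) : LeR D k₀ γ f a c := by
  obtain ⟨ha, h1⟩ := hab
  obtain ⟨hb, h2⟩ := hbc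
  refine ⟨ha, ?_⟩
  have h3 : (γ * (dist a.1 b.1 + dist b.1 c.1 - dist a.1 c.1)) • k₀ ∈ D := by
    refine hDsmul _ ?_ ⟨k₀, hk₀, rfl⟩
    have := dist_triangle a.1 b.1 c.1
    nlinarith
  have h4 : (c.2 - b.2 - (γ * dist b.1 c.1) • k₀) + (b.2 - a.2 - (γ * dist a.1 b.1) • k₀) ∈ D :=
    hDadd (Set.add_mem_add h2 h1)
  have h5 : ((c.2 - b.2 - (γ * dist b.1 c.1) • k₀) + (b.2 - a.2 - (γ * dist a.1 b.1) • k₀))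
      + (γ * (dist a.1 b.1 + dist b.1 c.1 - dist a.1 c.1)) • k₀ ∈ D :=
    hDadd (Set.add_mem_add h4 h3)
  have heq : ((c.2 - b.2 - (γ * dist b.1 c.1) • k₀) + (b.2 - a.2 - (γ * dist a.1 b.1) • k₀))
      + (γ * (dist a.1 b.1 + dist b.1 c.1 - dist a.1 c.1)) • k₀
      = c.2 - a.2 - (γ * dist a.1 c.1) • k₀ := by module
  rwa [heq] at h5

lemma mem_singleton_add_singleton_add {D : Set Y} {p q a : Y} :
    a ∈ ({p} : Set Y) + {q} + D ↔ a - p - q ∈ D := by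
  constructor
  · rintro ⟨_, ⟨_, hp, _, hq, rfl⟩, d, hd, rfl⟩
    simp only [Set.mem_singleton_iff] at hp hq
    subst hp; subst hq
    simpa [add_sub_cancel_left, sub_sub] using hd
  · intro h
    refine ⟨p + q, ⟨p, rfl, q, rfl, rfl⟩, a - p - q, h, by abel_nf⟩

end Aux

/-- **Corollary 5.6.** A Pareto-minimizer version of the set-valued EVP. -/
theorem EVP_pareto_minimizer {X Y : Type*} [MetricSpace X]
    [AddCommGroup Y] [Module ℝ Y] [TopologicalSpace Y] [IsTopologicalAddGroup Y]
    [ContinuousSMul ℝ Y] [LocallyConvexSpace ℝ Y]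
    (D : Set Y) (hDadd : D + D ⊆ D) (hDsmul : ∀ α : ℝ, 0 ≤ α → α • D ⊆ D)
    (k₀ : Y) (hk₀ : k₀ ∈ D) (hk₀' : k₀ ∉ -vcl D) (hDk₀ : vclDir k₀ D ⊆ D)
    (f : X → Set Y) (hf : ∀ x, (f x).Nonempty)
    (hlsca : ∀ (xs : ℕ → X) (xbar : X) (ys : ℕ → Y),
      Tendsto xs atTop (nhds xbar) → (∀ n, ys n ∈ f (xs n)) →
      (∀ n, ys n - ys (n + 1) ∈ D) →
      ∃ ybar ∈ f xbar, ∀ n, ys n - ybar ∈ D)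
    (hdom : ∀ x : X, StrictDomination D (f x))
    (hcomplete : ∀ (xs : ℕ → X) (ys : ℕ → Y),
      (∀ n, ys n ∈ f (xs n)) → (∀ n, ys n - ys (n + 1) ∈ D) →
      CauchySeq xs → ∃ u : X, Tendsto xs atTop (nhds u))
    (x₀ : X) (y₀ : Y) (hy₀ : y₀ ∈ f x₀) (ε : ℝ) (hε : 0 < ε)
    (heff : y₀ ∉ (⋃ x : X, f x) + {ε • k₀} + D) :
    ∀ lam : ℝ, 0 < lam → ∃ xhat : X, ∃ yhat : Y, yhat ∈ f xhat ∧
      (y₀ ∈ {yhat} + {((ε / lam) * dist xhat x₀) • k₀} + D ∧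
        StrictParetoMin D (f xhat) yhat) ∧
      (∀ x : X, ∀ y : Y, y ∈ f x → (x, y) ≠ (xhat, yhat) →
        yhat ∉ {y} + {((ε / lam) * dist x xhat) • k₀} + D) ∧
      dist x₀ xhat ≤ lam := by
  intro lam hlam
  set γ : ℝ := ε / lam with hγdef
  have hγ : 0 < γ := div_pos hε hlam
  have hγlam : γ * lam = ε := div_mul_cancel₀ ε hlam.ne'
  have hD0 : (0 : Y) ∈ D := by
    have := hDsmul 0 le_rfl ⟨k₀, hk₀, rfl⟩
    simpa using this
  have hkD : ∀ α : ℝ, 0 ≤ α → α • k₀ ∈ D := fun α hα => hDsmul α hα ⟨k₀, hk₀, rfl⟩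
  have hDD : ∀ a ∈ D, ∀ b ∈ D, a + b ∈ D := fun a ha b hb => hDadd (Set.add_mem_add ha hb)
  -- Key scalar bound coming from `heff`.
  have hkey : ∀ (x : X) (y : Y) (c : ℝ), y ∈ f x → y₀ - y - c • k₀ ∈ D → c ≤ ε := by
    intro x y c hyf hmem
    by_contra hc
    push_neg at hc
    apply heff
    have hd : y₀ - y - ε • k₀ ∈ D := by
      have h1 : (c - ε) • k₀ ∈ D := hkD _ (by linarith)
      have h2 := hDD _ hmem _ h1
      have heq : (y₀ - y - c • k₀) + (c - ε) • k₀ = y₀ - y - ε • k₀ := by module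
      rwa [heq] at h2
    have hyU : y + ε • k₀ ∈ (⋃ x : X, f x) + ({ε • k₀} : Set Y) :=
      Set.add_mem_add (Set.mem_iUnion.2 ⟨x, hyf⟩) rfl
    have := Set.add_mem_add hyU hd
    have heq : (y + ε • k₀) + (y₀ - y - ε • k₀) = y₀ := by abel
    rwa [heq] at this
  -- All points below `(x₀, y₀)` stay in the ball of radius `lam`.
  have hball : ∀ p : X × Y, LeR D k₀ γ f p (x₀, y₀) → dist p.1 x₀ ≤ lam := by
    intro p hp
    have := hkey p.1 p.2 (γ * dist p.1 x₀) hp.1 hp.2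
    rw [← hγlam] at this
    exact le_of_mul_le_mul_left this hγ
  -- The step function.
  have hstep : ∀ p : X × Y, ∃ q : X × Y, LeR D k₀ γ f p (x₀, y₀) →
      (LeR D k₀ γ f q (x₀, y₀) ∧ LeR D k₀ γ f q p ∧
        ∀ r : X × Y, LeR D k₀ γ f r p → dist r.1 p.1 ≤ 2 * dist q.1 p.1) := by
    intro p
    by_cases hp : LeR D k₀ γ f p (x₀, y₀)
    · set T : Set ℝ := (fun r : X × Y => dist r.1 p.1) '' {r | LeR D k₀ γ f r p} with hT
      have hTne : T.Nonempty := ⟨0, ⟨p, LeR_refl hD0 hp.1, dist_self _⟩⟩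
      have hTbdd : BddAbove T := by
        refine ⟨2 * lam, ?_⟩
        rintro t ⟨r, hr, rfl⟩
        have h1 : dist r.1 x₀ ≤ lam := hball r (LeR_trans hDadd hDsmul hk₀ hγ.le hr hp)
        have h2 : dist p.1 x₀ ≤ lam := hball p hp
        calc dist r.1 p.1 ≤ dist r.1 x₀ + dist x₀ p.1 := dist_triangle _ _ _
          _ ≤ lam + lam := by rw [dist_comm x₀ p.1]; linarith
          _ = 2 * lam := by ring
      set s := sSup T with hs
      by_cases hspos : 0 < s
      · obtain ⟨t, ⟨q, hq, rfl⟩, hts⟩ := exists_lt_of_lt_csSup hTne (by linarith : s / 2 < s)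
        refine ⟨q, fun _ => ⟨LeR_trans hDadd hDsmul hk₀ hγ.le hq hp, hq, ?_⟩⟩
        intro r hr
        have : dist r.1 p.1 ≤ s := le_csSup hTbdd ⟨r, hr, rfl⟩
        linarith
      · push_neg at hspos
        refine ⟨p, fun _ => ⟨hp, LeR_refl hD0 hp.1, ?_⟩⟩
        intro r hr
        have : dist r.1 p.1 ≤ s := le_csSup hTbdd ⟨r, hr, rfl⟩
        have : dist r.1 p.1 ≤ 0 := this.trans hspos
        simp only [dist_self, mul_zero]
        linarith
    · exact ⟨p, fun h => absurd h hp⟩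
  choose g hg using hstep
  set seq : ℕ → X × Y := fun n => g^[n] (x₀, y₀) with hseqdef
  have hseq0 : seq 0 = (x₀, y₀) := rfl
  have hseqS : ∀ n, seq (n + 1) = g (seq n) := fun n => Function.iterate_succ_apply' g n _
  have hGood : ∀ n, LeR D k₀ γ f (seq n) (x₀, y₀) := by
    intro n
    induction n with
    | zero => exact LeR_refl hD0 hy₀
    | succ n ih => rw [hseqS]; exact (hg _ ih).1
  have hle : ∀ n, LeR D k₀ γ f (seq (n + 1)) (seq n) := by
    intro n; rw [hseqS]; exact (hg _ (hGood n)).2.1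
  have hhalf : ∀ n, ∀ r : X × Y, LeR D k₀ γ f r (seq n) →
      dist r.1 (seq n).1 ≤ 2 * dist (seq (n + 1)).1 (seq n).1 := by
    intro n; rw [hseqS]; exact (hg _ (hGood n)).2.2
  set xs : ℕ → X := fun n => (seq n).1 with hxsdef
  set ys : ℕ → Y := fun n => (seq n).2 with hysdef
  have hmemf : ∀ n, ys n ∈ f (xs n) := fun n => (hGood n).1
  have hchain : ∀ n m, n ≤ m → LeR D k₀ γ f (seq m) (seq n) := by
    intro n m hnm
    induction m, hnm using Nat.le_induction with
    | base => exact LeR_refl hD0 (hmemf n)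
    | succ m hnm ih => exact LeR_trans hDadd hDsmul hk₀ hγ.le (hle m) ih
  -- partial sums of the consecutive distances
  set σ : ℕ → ℝ := fun n => ∑ k ∈ Finset.range n, dist (xs (k + 1)) (xs k) with hσdef
  have hsum : ∀ n, y₀ - ys n - (γ * σ n) • k₀ ∈ D := by
    intro n
    induction n with
    | zero =>
      simp only [hσdef, Finset.range_zero, Finset.sum_empty, mul_zero, zero_smul, sub_zero]
      have : ys 0 = y₀ := rfl
      rw [this, sub_self]; exact hD0
    | succ n ih =>
      have h1 := (hle n).2
      have h2 := hDD _ ih _ h1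
      have heq : (y₀ - ys n - (γ * σ n) • k₀)
          + (ys n - ys (n + 1) - (γ * dist (xs (n + 1)) (xs n)) • k₀)
          = y₀ - ys (n + 1) - (γ * (σ n + dist (xs (n + 1)) (xs n))) • k₀ := by module
      rw [heq] at h2
      have hσS : σ (n + 1) = σ n + dist (xs (n + 1)) (xs n) := Finset.sum_range_succ _ n
      rwa [hσS]
  have hσle : ∀ n, σ n ≤ lam := by
    intro n
    have := hkey (xs n) (ys n) (γ * σ n) (hmemf n) (hsum n)
    rw [← hγlam] at this
    exact le_of_mul_le_mul_left this hγ
  have hSummable : Summable (fun k => dist (xs (k + 1)) (xs k)) :=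
    summable_of_sum_range_le (fun _ => dist_nonneg) hσle
  have hCauchy : CauchySeq xs := by
    apply cauchySeq_of_summable_dist
    simpa [dist_comm] using hSummable
  have hdec : ∀ n, ys n - ys (n + 1) ∈ D := by
    intro n
    have h1 := (hle n).2
    have h2 := hDD _ h1 _ (hkD (γ * dist (xs (n + 1)) (xs n)) (mul_nonneg hγ.le dist_nonneg))
    have heq : (ys n - ys (n + 1) - (γ * dist (xs (n + 1)) (xs n)) • k₀)
        + (γ * dist (xs (n + 1)) (xs n)) • k₀ = ys n - ys (n + 1) := by module
    rwa [heq] at h2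
  obtain ⟨u, hxu⟩ := hcomplete xs ys hmemf hdec hCauchy
  obtain ⟨ybar, hybarf, hybarD⟩ := hlsca xs u ys hxu hmemf hdec
  -- (u, ybar) is below every (xs n, ys n)
  have hub : ∀ n, LeR D k₀ γ f (u, ybar) (seq n) := by
    intro n
    refine ⟨hybarf, ?_⟩
    apply hDk₀
    refine ⟨fun m => γ * (dist u (xs n) + dist u (xs (m + n)) - dist (xs (m + n)) (xs n)),
      ?_, ?_, ?_⟩
    · intro m
      have h1 : dist (xs (m + n)) (xs n) ≤ dist (xs (m + n)) u + dist u (xs n) :=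
        dist_triangle _ _ _
      rw [dist_comm (xs (m + n)) u] at h1
      have : 0 ≤ dist u (xs n) + dist u (xs (m + n)) - dist (xs (m + n)) (xs n) := by linarith
      exact mul_nonneg hγ.le this
    · have h1 : Tendsto (fun m => xs (m + n)) atTop (nhds u) :=
        hxu.comp (tendsto_add_atTop_nat n)
      have h0 : Tendsto (fun _ : ℕ => u) atTop (nhds u) := tendsto_const_nhds
      have h2 : Tendsto (fun m => dist u (xs (m + n))) atTop (nhds 0) := by
        have := h0.dist h1
        simpa using this
      have h3 : Tendsto (fun m => dist (xs (m + n)) (xs n)) atTop (nhds (dist u (xs n))) :=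
        h1.dist tendsto_const_nhds
      have hcst : Tendsto (fun _ : ℕ => dist u (xs n)) atTop (nhds (dist u (xs n))) :=
        tendsto_const_nhds
      have h4 := Filter.Tendsto.const_mul γ ((hcst.add h2).sub h3)
      simpa using h4
    · intro m
      have hc : LeR D k₀ γ f (seq (m + n)) (seq n) := hchain n (m + n) (Nat.le_add_left n m)
      have hA := hc.2
      have hB : ys (m + n) - ybar ∈ D := hybarD (m + n)
      have hC : (γ * dist u (xs (m + n))) • k₀ ∈ D := hkD _ (mul_nonneg hγ.le dist_nonneg)
      have h5 := hDD _ (hDD _ hA _ hB) _ hC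
      have heq : (ys n - ys (m + n) - (γ * dist (xs (m + n)) (xs n)) • k₀)
          + (ys (m + n) - ybar) + (γ * dist u (xs (m + n))) • k₀
          = (ys n - ybar - (γ * dist u (xs n)) • k₀)
            + (γ * (dist u (xs n) + dist u (xs (m + n)) - dist (xs (m + n)) (xs n))) • k₀ := by
        module
      rwa [heq] at h5
  -- minimality of (u, ybar)
  have hmin : ∀ r : X × Y, LeR D k₀ γ f r (u, ybar) → r.1 = u ∧ ybar - r.2 ∈ D := by
    intro r hr
    have htr : ∀ n, LeR D k₀ γ f r (seq n) := fun n =>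
      LeR_trans hDadd hDsmul hk₀ hγ.le hr (hub n)
    have hd : ∀ n, dist r.1 (xs n) ≤ 2 * dist (xs (n + 1)) (xs n) := fun n =>
      hhalf n r (htr n)
    have h4 : Tendsto (fun n => dist (xs (n + 1)) (xs n)) atTop (nhds 0) :=
      hSummable.tendsto_atTop_zero
    have h5 : Tendsto (fun n => 2 * dist (xs (n + 1)) (xs n) + dist (xs n) u) atTop (nhds 0) := by
      have h6 : Tendsto (fun n => dist (xs n) u) atTop (nhds 0) := by
        have hcu : Tendsto (fun _ : ℕ => u) atTop (nhds u) := tendsto_const_nhds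
        have := hxu.dist hcu
        simpa using this
      have := (Filter.Tendsto.const_mul 2 h4).add h6
      simpa using this
    have h7 : dist r.1 u ≤ 0 := by
      refine ge_of_tendsto' h5 fun n => ?_
      calc dist r.1 u ≤ dist r.1 (xs n) + dist (xs n) u := dist_triangle _ _ _
        _ ≤ 2 * dist (xs (n + 1)) (xs n) + dist (xs n) u := by linarith [hd n]
    have hru : r.1 = u := by
      rw [← dist_le_zero]; exact h7
    refine ⟨hru, ?_⟩
    have := hr.2
    simp only [hru, dist_self, mul_zero, zero_smul, sub_zero] at this
    exact this
  obtain ⟨yhat, hyhatMin, hyhatD⟩ := hdom u ybar hybarf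
  have hyhatf : yhat ∈ f u := hyhatMin.1
  have hlehat : LeR D k₀ γ f (u, yhat) (u, ybar) := by
    refine ⟨hyhatf, ?_⟩
    simpa [dist_self] using hyhatD
  have hhat₀ : LeR D k₀ γ f (u, yhat) (x₀, y₀) := by
    have h0 : LeR D k₀ γ f (u, ybar) (x₀, y₀) := hub 0
    exact LeR_trans hDadd hDsmul hk₀ hγ.le hlehat h0
  refine ⟨u, yhat, hyhatf, ⟨?_, hyhatMin⟩, ?_, ?_⟩
  · rw [mem_singleton_add_singleton_add]
    exact hhat₀.2
  · intro x y hyf hne hmem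
    rw [mem_singleton_add_singleton_add] at hmem
    have hxy : LeR D k₀ γ f (x, y) (u, yhat) := ⟨hyf, hmem⟩
    have h1 : LeR D k₀ γ f (x, y) (u, ybar) :=
      LeR_trans hDadd hDsmul hk₀ hγ.le hxy hlehat
    obtain ⟨hxu', _⟩ := hmin (x, y) h1
    simp only at hxu'
    subst hxu'
    have hyne : y ≠ yhat := fun h => hne (by rw [h])
    have h2 : yhat - y ∈ D := by
      have := hxy.2
      simpa [dist_self] using this
    exact hyhatMin.2 y hyf hyne h2
  · rw [dist_comm]
    exact hball (u, yhat) hhat₀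
end
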